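/- arXiv:2511.01280 — 6 statements merged into one kernel-verified Lean document; each statement's English description precedes it below -/
import Mathlib

section
/- For every integer q ≥ 2, every integer n ≥ 1, and every fixed boundary symbol x_0 ∈ Σ_q, there exist a boundary symbol x_{n+1} ∈ Σ_q and a code C ⊆ Σ_q^n with |C| ≥ q^{n+1} / ((q−1)(n+2)) such that C is a single-deletion labeling code for the pair-read labeling with boundary symbols x_0, x_{n+1}; that is, for all distinct x, x' ∈ C, no sequence can be obtained from both L(x) and L(x') by deleting at most one coordinate. -/
/-- Lists obtained from `u` by deleting at most one coordinate. -/
def delBall1 {σ : Type*} (u : List σ) : Set (List σ) :=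
  insert u {v | ∃ i < u.length, v = u.eraseIdx i}
/-- The extended word `x₀ x x_{n+1}`. -/
def extWord {q n : ℕ} (x0 xe : Fin q) (x : Fin n → Fin q) : Fin (n + 2) → Fin q :=
  Fin.cons x0 (Fin.snoc x xe)

/-- The pair-read labeling of `x` with boundary symbols `x0`, `xe`:
`L(x) = ((x₀,x₁),(x₁,x₂),…,(x_n,x_{n+1}))`. -/
def pairLabel {q n : ℕ} (x0 xe : Fin q) (x : Fin n → Fin q) : List (Fin q × Fin q) :=
  List.ofFn fun i : Fin (n + 1) =>
    (extWord x0 xe x i.castSucc, extWord x0 xe x i.succ)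

namespace Stmt0
variable {q n : ℕ} (x0 xe : Fin q)

/-- `Ynat x k` : the `k`-th symbol of the extended word, as a total function on `ℕ`. -/
def Ynat (x : Fin n → Fin q) (k : ℕ) : Fin q :=
  if h : k < n + 2 then extWord x0 xe x ⟨k, h⟩ else x0

lemma Ynat_zero (x : Fin n → Fin q) : Ynat x0 xe x 0 = x0 := by
  simp [Ynat, extWord]

lemma Ynat_mid (x : Fin n → Fin q) (k : ℕ) (hk : k < n) :
    Ynat x0 xe x (k + 1) = x ⟨k, hk⟩ := by
  have h : k + 1 < n + 2 := by omega
  rw [Ynat, dif_pos h]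
  have e1 : (⟨k+1, h⟩ : Fin (n+2)) = Fin.succ ⟨k, by omega⟩ := rfl
  have e2 : (⟨k, by omega⟩ : Fin (n+1)) = Fin.castSucc ⟨k, hk⟩ := rfl
  rw [extWord, e1, Fin.cons_succ, e2, Fin.snoc_castSucc]

lemma Ynat_last (x : Fin n → Fin q) : Ynat x0 xe x (n + 1) = xe := by
  have h : n + 1 < n + 2 := by omega
  rw [Ynat, dif_pos h]
  have e1 : (⟨n+1, h⟩ : Fin (n+2)) = Fin.succ ⟨n, by omega⟩ := rfl
  have e2 : (⟨n, by omega⟩ : Fin (n+1)) = Fin.last n := rfl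
  rw [extWord, e1, Fin.cons_succ, e2, Fin.snoc_last]

lemma pairLabel_length (x : Fin n → Fin q) : (pairLabel x0 xe x).length = n + 1 := by
  simp [pairLabel]

lemma pairLabel_get (x : Fin n → Fin q) (k : ℕ) (h : k < (pairLabel x0 xe x).length) :
    (pairLabel x0 xe x)[k] = (Ynat x0 xe x k, Ynat x0 xe x (k + 1)) := by
  have hk : k < n + 1 := by rwa [pairLabel_length] at h
  simp only [pairLabel, List.getElem_ofFn]
  have h1 : k < n + 2 := by omega
  have h2 : k + 1 < n + 2 := by omega
  rw [Ynat, dif_pos h1, Ynat, dif_pos h2]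
  congr 1

lemma eq_of_Ynat_eq (x x' : Fin n → Fin q)
    (h : ∀ k, k ≤ n + 1 → Ynat x0 xe x k = Ynat x0 xe x' k) : x = x' := by
  funext j
  have hj : (j : ℕ) < n := j.isLt
  simpa [Ynat_mid x0 xe x j hj, Ynat_mid x0 xe x' j hj] using h (j + 1) (by omega)


/-- Indicator that position `k` is a boundary (run break) of the extended word. -/
def ind (x : Fin n → Fin q) (k : ℕ) : ℕ :=
  if Ynat x0 xe x k = Ynat x0 xe x (k + 1) then 0 else 1

def bcount (x : Fin n → Fin q) : ℕ := ∑ k ∈ Finset.range (n + 1), ind x0 xe x k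

def Ssyn (x : Fin n → Fin q) : ℕ := ∑ k ∈ Finset.range (n + 1), k * ind x0 xe x k

lemma ind_eq_zero {x : Fin n → Fin q} {k : ℕ} (h : ind x0 xe x k = 0) :
    Ynat x0 xe x k = Ynat x0 xe x (k + 1) := by
  by_contra hne
  rw [ind, if_neg hne] at h
  exact one_ne_zero h

lemma key (x x' : Fin n → Fin q) (i j : ℕ) (hi : i < n + 1) (hj : j < n + 1) (hij : i ≤ j)
    (hv : (pairLabel x0 xe x).eraseIdx i = (pairLabel x0 xe x').eraseIdx j) :
    x = x' ∨ (bcount x0 xe x' = bcount x0 xe x ∧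
      ∃ m, 0 < m ∧ m ≤ bcount x0 xe x ∧ Ssyn x0 xe x = Ssyn x0 xe x' + m) := by
  have hlen : ((pairLabel x0 xe x).eraseIdx i).length = n := by
    rw [List.length_eraseIdx, pairLabel_length]
    simp [hi]
  have hlen' : ((pairLabel x0 xe x').eraseIdx j).length = n := by
    rw [List.length_eraseIdx, pairLabel_length]
    simp [hj]
  -- pointwise consequence of the list equality
  have hget : ∀ k, k < n →
      (if k < i then (Ynat x0 xe x k, Ynat x0 xe x (k+1))
        else (Ynat x0 xe x (k+1), Ynat x0 xe x (k+2))) =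
      (if k < j then (Ynat x0 xe x' k, Ynat x0 xe x' (k+1))
        else (Ynat x0 xe x' (k+1), Ynat x0 xe x' (k+2))) := by
    intro k hk
    have h1 : k < ((pairLabel x0 xe x).eraseIdx i).length := by omega
    have h2 : k < ((pairLabel x0 xe x').eraseIdx j).length := by omega
    have := List.getElem_of_eq hv h1
    rw [List.getElem_eraseIdx, List.getElem_eraseIdx] at this
    simp only [pairLabel_get, dite_eq_ite] at this
    have e : k + 1 + 1 = k + 2 := rfl
    rw [e] at this
    exact this
  have H1 : ∀ k, k ≤ i → Ynat x0 xe x' k = Ynat x0 xe x k := by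
    intro k hk
    match k with
    | 0 => rw [Ynat_zero, Ynat_zero]
    | (t+1) =>
      have ht : t < n := by omega
      have := hget t ht
      rw [if_pos (by omega : t < i), if_pos (by omega : t < j), Prod.mk.injEq] at this
      exact this.2.symm
  rcases eq_or_lt_of_le hij with rfl | hij'
  · -- i = j : the words coincide
    left
    apply eq_of_Ynat_eq
    intro k hk
    match k with
    | 0 => rw [Ynat_zero, Ynat_zero]
    | (t+1) =>
      rcases le_or_gt (t+1) i with h | h
      · exact (H1 (t+1) h).symm
      · rcases eq_or_lt_of_le hk with h' | h'
        · cases h'; rw [Ynat_last, Ynat_last]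
        · have ht : t < n := by omega
          have := hget t ht
          rw [if_neg (by omega), if_neg (by omega), Prod.mk.injEq] at this
          exact this.1
  · -- i < j
    have H2 : ∀ k, i ≤ k → k ≤ j → Ynat x0 xe x' k = Ynat x0 xe x (k+1) := by
      intro k hki hkj
      rcases lt_or_eq_of_le hkj with h | rfl
      · have := hget k (by omega)
        rw [if_neg (by omega), if_pos h, Prod.mk.injEq] at this
        exact this.1.symm
      · have ht : k - 1 < n := by omega
        have := hget (k-1) ht
        rw [if_neg (by omega), if_pos (by omega), Prod.mk.injEq] at this
        have h2 := this.2.symm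
        have e1 : k - 1 + 1 = k := by omega
        have e2 : k - 1 + 2 = k + 1 := by omega
        rw [e1, e2] at h2
        exact h2
    have H3 : ∀ k, j < k → k ≤ n + 1 → Ynat x0 xe x' k = Ynat x0 xe x k := by
      intro k hk1 hk2
      rcases eq_or_lt_of_le hk2 with rfl | h
      · rw [Ynat_last, Ynat_last]
      · have ht : k - 1 < n := by omega
        have := hget (k-1) ht
        rw [if_neg (by omega), if_neg (by omega), Prod.mk.injEq] at this
        have h1 := this.1.symm
        have e1 : k - 1 + 1 = k := by omega
        rw [e1] at h1
        exact h1
    have H4 : Ynat x0 xe x i = Ynat x0 xe x (i+1) :=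
      (H1 i le_rfl).symm.trans (H2 i le_rfl (le_of_lt hij'))
    have I0 : ind x0 xe x i = 0 := if_pos H4
    have IA : ∀ k, k < i → ind x0 xe x' k = ind x0 xe x k := by
      intro k hk
      rw [ind, ind, H1 k (by omega), H1 (k+1) (by omega)]
    have IB : ∀ k, i ≤ k → k < j → ind x0 xe x' k = ind x0 xe x (k+1) := by
      intro k h1 h2
      rw [ind, ind, H2 k h1 (by omega), H2 (k+1) (by omega) (by omega)]
    have IJ : ind x0 xe x' j = 0 := by
      rw [ind, H2 j (by omega) le_rfl, H3 (j+1) (by omega) (by omega)]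
      exact if_pos rfl
    have IC : ∀ k, j < k → k < n + 1 → ind x0 xe x' k = ind x0 xe x k := by
      intro k h1 h2
      rw [ind, ind, H3 k (by omega) (by omega), H3 (k+1) (by omega) (by omega)]
    -- sum splitting
    have split : ∀ (g : ℕ → ℕ) (a : ℕ), a < n + 1 →
        ∑ k ∈ Finset.range (n+1), g k =
          ((∑ k ∈ Finset.Ico 0 a, g k) + g a) + ∑ k ∈ Finset.Ico (a+1) (n+1), g k := by
      intro g a ha
      rw [Finset.range_eq_Ico,
        ← Finset.sum_Ico_consecutive g (by omega : 0 ≤ a) (by omega : a ≤ n+1),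
        ← Finset.sum_Ico_consecutive g (by omega : a ≤ a+1) (by omega : a+1 ≤ n+1)]
      have : Finset.Ico a (a+1) = {a} := by
        rw [Nat.Ico_succ_singleton]
      rw [this, Finset.sum_singleton, add_assoc]
    have splitmid : ∀ (g : ℕ → ℕ),
        ∑ k ∈ Finset.Ico (i+1) (n+1), g k =
          (∑ k ∈ Finset.Ico (i+1) (j+1), g k) + ∑ k ∈ Finset.Ico (j+1) (n+1), g k := by
      intro g
      rw [Finset.sum_Ico_consecutive g (by omega : i+1 ≤ j+1) (by omega : j+1 ≤ n+1)]
    have splitA : ∀ (g : ℕ → ℕ),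
        ∑ k ∈ Finset.Ico 0 j, g k =
          (∑ k ∈ Finset.Ico 0 i, g k) + ∑ k ∈ Finset.Ico i j, g k := by
      intro g
      rw [Finset.sum_Ico_consecutive g (by omega : (0:ℕ) ≤ i) (by omega : i ≤ j)]
    have shift : ∀ g : ℕ → ℕ,
        ∑ k ∈ Finset.Ico (i+1) (j+1), g k = ∑ k ∈ Finset.Ico i j, g (k+1) := by
      intro g
      rw [← Finset.sum_Ico_add (fun t => g t) i j 1]
      exact Finset.sum_congr rfl (fun k _ => by rw [Nat.add_comm])
    set m := ∑ k ∈ Finset.Ico (i+1) (j+1), ind x0 xe x k with hmdef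
    by_cases hm0 : m = 0
    · -- all boundary indicators in the window vanish: the words coincide
      left
      have hc : ∀ k, i ≤ k → k ≤ j → Ynat x0 xe x k = Ynat x0 xe x (k+1) := by
        intro k h1 h2
        rcases eq_or_lt_of_le h1 with rfl | h1'
        · exact H4
        · exact ind_eq_zero x0 xe (Finset.sum_eq_zero_iff.mp hm0 k (by
            rw [Finset.mem_Ico]; omega))
      apply eq_of_Ynat_eq
      intro k hk
      rcases le_or_gt k i with h | h
      · exact (H1 k h).symm
      rcases le_or_gt k j with h' | h'
      · exact (hc k (by omega) h').trans (H2 k (by omega) h').symm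
      · exact (H3 k h' hk).symm
    · -- the window contains a boundary: syndromes differ by `m ∈ [1, bcount x]`
      right
      have eA : ∑ k ∈ Finset.Ico 0 i, ind x0 xe x' k = ∑ k ∈ Finset.Ico 0 i, ind x0 xe x k :=
        Finset.sum_congr rfl (fun k hk => by rw [Finset.mem_Ico] at hk; exact IA k hk.2)
      have eD : ∑ k ∈ Finset.Ico (j+1) (n+1), ind x0 xe x' k
          = ∑ k ∈ Finset.Ico (j+1) (n+1), ind x0 xe x k :=
        Finset.sum_congr rfl (fun k hk => by rw [Finset.mem_Ico] at hk; exact IC k hk.1 hk.2)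
      have IBcongr : ∑ k ∈ Finset.Ico i j, ind x0 xe x' k = m := by
        rw [hmdef, shift (ind x0 xe x)]
        exact Finset.sum_congr rfl (fun k hk => by
          rw [Finset.mem_Ico] at hk; exact IB k hk.1 hk.2)
      have hbx : bcount x0 xe x =
          ((∑ k ∈ Finset.Ico 0 i, ind x0 xe x k) + ind x0 xe x i) +
            (m + ∑ k ∈ Finset.Ico (j+1) (n+1), ind x0 xe x k) := by
        rw [bcount, split (ind x0 xe x) i hi, splitmid (ind x0 xe x)]
      have hbx' : bcount x0 xe x' =
          (((∑ k ∈ Finset.Ico 0 i, ind x0 xe x k) + m) + 0) +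
            ∑ k ∈ Finset.Ico (j+1) (n+1), ind x0 xe x k := by
        rw [bcount, split (ind x0 xe x') j hj, splitA (ind x0 xe x'), eA, eD, IBcongr, IJ]
      refine ⟨by rw [hbx, hbx', I0]; omega, m, by omega, by rw [hbx]; omega, ?_⟩
      -- syndrome computation
      have hMS : ∑ k ∈ Finset.Ico (i+1) (j+1), k * ind x0 xe x k =
          (∑ k ∈ Finset.Ico (i+1) (j+1), (k-1) * ind x0 xe x k) + m := by
        rw [hmdef, ← Finset.sum_add_distrib]
        refine Finset.sum_congr rfl (fun k hk => ?_)
        rw [Finset.mem_Ico] at hk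
        obtain ⟨k', rfl⟩ : ∃ k', k = k' + 1 := ⟨k - 1, by omega⟩
        simp [Nat.succ_mul]
      have hSx : Ssyn x0 xe x =
          ((∑ k ∈ Finset.Ico 0 i, k * ind x0 xe x k) + i * ind x0 xe x i) +
            ((((∑ k ∈ Finset.Ico (i+1) (j+1), (k-1) * ind x0 xe x k) + m)) +
              ∑ k ∈ Finset.Ico (j+1) (n+1), k * ind x0 xe x k) := by
        rw [Ssyn, split (fun k => k * ind x0 xe x k) i hi,
          splitmid (fun k => k * ind x0 xe x k), hMS]
      have eAS : ∑ k ∈ Finset.Ico 0 i, k * ind x0 xe x' k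
          = ∑ k ∈ Finset.Ico 0 i, k * ind x0 xe x k :=
        Finset.sum_congr rfl (fun k hk => by rw [Finset.mem_Ico] at hk; rw [IA k hk.2])
      have eDS : ∑ k ∈ Finset.Ico (j+1) (n+1), k * ind x0 xe x' k
          = ∑ k ∈ Finset.Ico (j+1) (n+1), k * ind x0 xe x k :=
        Finset.sum_congr rfl (fun k hk => by
          rw [Finset.mem_Ico] at hk; rw [IC k hk.1 hk.2])
      have hshift : ∑ k ∈ Finset.Ico i j, k * ind x0 xe x' k =
          ∑ k ∈ Finset.Ico (i+1) (j+1), (k-1) * ind x0 xe x k := by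
        rw [shift (fun t => (t-1) * ind x0 xe x t)]
        refine Finset.sum_congr rfl (fun k hk => ?_)
        rw [Finset.mem_Ico] at hk
        rw [IB k hk.1 hk.2, show k + 1 - 1 = k from rfl]
      have hSx' : Ssyn x0 xe x' =
          (((∑ k ∈ Finset.Ico 0 i, k * ind x0 xe x k) +
            (∑ k ∈ Finset.Ico (i+1) (j+1), (k-1) * ind x0 xe x k)) + j * 0) +
            ∑ k ∈ Finset.Ico (j+1) (n+1), k * ind x0 xe x k := by
        rw [Ssyn, split (fun k => k * ind x0 xe x' k) j hj,
          splitA (fun k => k * ind x0 xe x' k), eAS, eDS, hshift, IJ]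
      rw [hSx, hSx', I0]
      omega

section Counting
variable (q : ℕ) [NeZero q]

/-- Hamming weight of a vector over `ZMod q`. -/
def wt {M : ℕ} (e : Fin M → ZMod q) : ℕ := ∑ k, if e k = 0 then 0 else 1

/-- Number of everywhere-nonzero zero-sum vectors of length `b`. -/
def Kcard (b : ℕ) : ℕ :=
  (Finset.univ.filter (fun e : Fin b → ZMod q => (∀ i, e i ≠ 0) ∧ ∑ i, e i = 0)).card

lemma card_nonzero (b : ℕ) :
    (Finset.univ.filter (fun e : Fin b → ZMod q => ∀ i, e i ≠ 0)).card = (q - 1) ^ b := by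
  classical
  rw [← Fintype.card_subtype]
  rw [Fintype.card_congr (Equiv.subtypePiEquivPi (p := fun (_ : Fin b) (y : ZMod q) => y ≠ 0))]
  rw [Fintype.card_pi]
  have : Fintype.card {y : ZMod q // y ≠ 0} = q - 1 := by
    rw [Fintype.card_subtype_compl, Fintype.card_subtype_eq, ZMod.card]
  simp [this]

lemma Kcard_zero : Kcard q 0 = 1 := by
  rw [Kcard]
  rw [Finset.filter_true_of_mem (fun e _ => ⟨fun i => i.elim0, by simp⟩)]
  simp

lemma Kcard_rec (b : ℕ) : Kcard q (b + 1) + Kcard q b = (q - 1) ^ b := by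
  classical
  have h1 : Kcard q (b+1) =
      (Finset.univ.filter
        (fun f : Fin b → ZMod q => (∀ i, f i ≠ 0) ∧ ¬ (∑ i, f i = 0))).card := by
    rw [Kcard]
    refine Finset.card_bij' (fun e _ => Fin.init e) (fun f _ => Fin.snoc f (- ∑ i, f i))
      ?hi ?hj ?left ?right
    case hi =>
      intro e he
      show Fin.init e ∈ _
      rw [Finset.mem_filter] at he ⊢
      obtain ⟨-, hnz, hsum⟩ := he
      rw [Fin.sum_univ_castSucc] at hsum
      refine ⟨Finset.mem_univ _, fun i => hnz _, ?_⟩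
      intro h0
      have hini : Fin.init e = fun i => e i.castSucc := rfl
      rw [hini] at h0
      rw [h0, zero_add] at hsum
      exact hnz (Fin.last b) hsum
    case hj =>
      intro f hf
      show Fin.snoc (α := fun _ => ZMod q) f (-∑ i, f i) ∈ _
      rw [Finset.mem_filter] at hf ⊢
      obtain ⟨-, hnz, hsum⟩ := hf
      refine ⟨Finset.mem_univ _, fun i => ?_, ?_⟩
      · refine Fin.lastCases ?_ ?_ i
        · rw [Fin.snoc_last]
          simpa using hsum
        · intro j
          rw [Fin.snoc_castSucc]
          exact hnz j
      · rw [Fin.sum_univ_castSucc]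
        simp
    case left =>
      intro e he
      show Fin.snoc (Fin.init e) (-∑ i, Fin.init e i) = e
      rw [Finset.mem_filter] at he
      obtain ⟨-, hnz, hsum⟩ := he
      have hlast : e (Fin.last b) = - ∑ i, Fin.init e i := by
        rw [Fin.sum_univ_castSucc] at hsum
        have hini : Fin.init e = fun i => e i.castSucc := rfl
        rw [hini]
        linear_combination hsum
      rw [← hlast, Fin.snoc_init_self]
    case right =>
      intro f hf
      simpa using Fin.init_snoc (-∑ i, f i) f
  have h2 : (Finset.univ.filter
        (fun f : Fin b → ZMod q => (∀ i, f i ≠ 0) ∧ ¬ (∑ i, f i = 0))).card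
      + Kcard q b = (q - 1) ^ b := by
    rw [Kcard, ← card_nonzero q b]
    have e1 : (Finset.univ.filter (fun f : Fin b → ZMod q => (∀ i, f i ≠ 0) ∧ ¬ (∑ i, f i = 0)))
        = (Finset.univ.filter (fun f : Fin b → ZMod q => ∀ i, f i ≠ 0)).filter
            (fun f => ¬ (∑ i, f i = 0)) := by
      rw [Finset.filter_filter]
    have e2 : (Finset.univ.filter (fun f : Fin b → ZMod q => (∀ i, f i ≠ 0) ∧ (∑ i, f i = 0)))
        = (Finset.univ.filter (fun f : Fin b → ZMod q => ∀ i, f i ≠ 0)).filter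
            (fun f => (∑ i, f i = 0)) := by
      rw [Finset.filter_filter]
    rw [e1, e2, add_comm]
    exact Finset.card_filter_add_card_filter_not _
  rw [h1]
  exact h2

lemma card_cons_split {M : ℕ} (p : (Fin (M+1) → ZMod q) → Prop) [DecidablePred p] :
    (Finset.univ.filter p).card
      = ∑ a : ZMod q, (Finset.univ.filter (fun f : Fin M → ZMod q => p (Fin.cons a f))).card := by
  classical
  simp only [Finset.card_filter]
  rw [← Equiv.sum_comp (Fin.consEquiv (fun _ : Fin (M+1) => ZMod q))
    (fun e => if p e then 1 else 0)]
  rw [Fintype.sum_prod_type]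
  rfl

lemma wt_cons {M : ℕ} (a : ZMod q) (f : Fin M → ZMod q) :
    wt q (Fin.cons a f) = (if a = 0 then 0 else 1) + wt q f := by
  rw [wt, wt, Fin.sum_univ_succ]
  simp [Fin.cons_succ]

lemma Wcard : ∀ (M b : ℕ),
    (Finset.univ.filter (fun e : Fin M → ZMod q => wt q e = b)).card
      = M.choose b * (q - 1) ^ b := by
  intro M
  induction M with
  | zero =>
    intro b
    match b with
    | 0 =>
      rw [Finset.filter_true_of_mem (fun e _ => by simp [wt])]
      simp
    | (b+1) =>
      rw [Finset.filter_false_of_mem (fun e _ => by simp [wt]), Finset.card_empty,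
        Nat.choose_eq_zero_of_lt (by omega), zero_mul]
  | succ M ih =>
    intro b
    rw [card_cons_split q (fun e => wt q e = b)]
    have hsplit : ∀ a : ZMod q,
        (Finset.univ.filter (fun f : Fin M → ZMod q => wt q (Fin.cons a f) = b))
          = (Finset.univ.filter (fun f : Fin M → ZMod q =>
              (if a = 0 then 0 else 1) + wt q f = b)) := by
      intro a
      apply Finset.filter_congr
      intro f _
      rw [wt_cons]
    rw [Finset.sum_congr rfl (fun a _ => by rw [hsplit a])]
    rw [← Finset.add_sum_erase _ _ (Finset.mem_univ (0 : ZMod q))]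
    have h0 : (Finset.univ.filter (fun f : Fin M → ZMod q =>
        (if (0 : ZMod q) = 0 then 0 else 1) + wt q f = b)).card = M.choose b * (q-1)^b := by
      rw [Finset.filter_congr (fun f _ => by rw [if_pos rfl, Nat.zero_add])]
      exact ih b
    rw [h0]
    match b with
    | 0 =>
      have hne : ∀ a ∈ Finset.univ.erase (0 : ZMod q),
          (Finset.univ.filter (fun f : Fin M → ZMod q =>
            (if a = 0 then 0 else 1) + wt q f = 0)).card = 0 := by
        intro a ha
        have ha' := (Finset.mem_erase.mp ha).1
        rw [Finset.filter_false_of_mem (fun f _ => by rw [if_neg ha']; omega)]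
        simp
      rw [Finset.sum_congr rfl hne]
      simp
    | (b'+1) =>
      have hne : ∀ a ∈ Finset.univ.erase (0 : ZMod q),
          (Finset.univ.filter (fun f : Fin M → ZMod q =>
            (if a = 0 then 0 else 1) + wt q f = b'+1)).card = M.choose b' * (q-1)^b' := by
        intro a ha
        have ha' := (Finset.mem_erase.mp ha).1
        have hcongr : (Finset.univ.filter (fun f : Fin M → ZMod q =>
            (if a = 0 then 0 else 1) + wt q f = b'+1))
            = (Finset.univ.filter (fun f : Fin M → ZMod q => wt q f = b')) :=
          Finset.filter_congr (fun f _ => by rw [if_neg ha']; omega)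
        rw [hcongr]
        exact ih b'
      rw [Finset.sum_congr rfl hne, Finset.sum_const]
      rw [Finset.card_erase_of_mem (Finset.mem_univ _), Finset.card_univ, ZMod.card,
        Nat.choose_succ_succ, smul_eq_mul]
      ring
  -- end Wcard

lemma Ncard : ∀ (M b : ℕ),
    (Finset.univ.filter (fun e : Fin M → ZMod q => (∑ i, e i = 0) ∧ wt q e = b)).card
      = M.choose b * Kcard q b := by
  intro M
  induction M with
  | zero =>
    intro b
    match b with
    | 0 =>
      rw [Finset.filter_true_of_mem (fun e _ => by simp [wt])]
      simp [Kcard_zero]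
    | (b+1) =>
      rw [Finset.filter_false_of_mem (fun e _ => by simp [wt]), Finset.card_empty,
        Nat.choose_eq_zero_of_lt (by omega), zero_mul]
  | succ M ih =>
    intro b
    -- snoc bijection to a predicate on length-M vectors
    have hbij : (Finset.univ.filter
          (fun e : Fin (M+1) → ZMod q => (∑ i, e i = 0) ∧ wt q e = b)).card
        = (Finset.univ.filter (fun f : Fin M → ZMod q =>
            ((∑ i, f i = 0) ∧ wt q f = b) ∨ (¬ (∑ i, f i = 0) ∧ wt q f + 1 = b))).card := by
      refine Finset.card_bij' (fun e _ => Fin.init e) (fun f _ => Fin.snoc f (- ∑ i, f i))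
        ?hi ?hj ?left ?right
      case hi =>
        intro e he
        show Fin.init e ∈ _
        rw [Finset.mem_filter] at he ⊢
        obtain ⟨-, hsum, hwt⟩ := he
        refine ⟨Finset.mem_univ _, ?_⟩
        have hini : Fin.init e = fun i => e i.castSucc := rfl
        rw [Fin.sum_univ_castSucc] at hsum
        have hwt' : wt q (fun i => e i.castSucc) + (if e (Fin.last M) = 0 then 0 else 1)
            = b := by
          rw [← hwt, wt, wt, Fin.sum_univ_castSucc]
        by_cases hz : ∑ i : Fin M, e i.castSucc = 0
        · left
          rw [hini]
          have hlz : e (Fin.last M) = 0 := by rw [hz, zero_add] at hsum; exact hsum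
          rw [if_pos hlz] at hwt'
          exact ⟨hz, by omega⟩
        · right
          rw [hini]
          have hlz : e (Fin.last M) ≠ 0 := by
            intro h0; rw [h0, add_zero] at hsum; exact hz hsum
          rw [if_neg hlz] at hwt'
          exact ⟨hz, by omega⟩
      case hj =>
        intro f hf
        show Fin.snoc (α := fun _ => ZMod q) f (-∑ i, f i) ∈ _
        rw [Finset.mem_filter] at hf ⊢
        obtain ⟨-, hf⟩ := hf
        have hsum : ∑ i : Fin (M+1), Fin.snoc f (-∑ i, f i) i = 0 := by
          rw [Fin.sum_univ_castSucc]
          simp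
        have hwt : wt q (Fin.snoc f (-∑ i, f i))
            = wt q f + (if (∑ i, f i) = 0 then 0 else 1) := by
          rw [wt, wt, Fin.sum_univ_castSucc]
          simp only [Fin.snoc_castSucc, Fin.snoc_last, neg_eq_zero]
        refine ⟨Finset.mem_univ _, hsum, ?_⟩
        rcases hf with ⟨h1, h2⟩ | ⟨h1, h2⟩
        · rw [hwt, if_pos h1, add_zero]; exact h2
        · rw [hwt, if_neg h1]; omega
      case left =>
        intro e he
        show Fin.snoc (Fin.init e) (-∑ i, Fin.init e i) = e
        rw [Finset.mem_filter] at he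
        obtain ⟨-, hsum, -⟩ := he
        have hlast : e (Fin.last M) = - ∑ i, Fin.init e i := by
          rw [Fin.sum_univ_castSucc] at hsum
          have hini : Fin.init e = fun i => e i.castSucc := rfl
          rw [hini]
          linear_combination hsum
        rw [← hlast, Fin.snoc_init_self]
      case right =>
        intro f hf
        simpa using Fin.init_snoc (-∑ i, f i) f
    rw [hbij]
    have hor : (Finset.univ.filter (fun f : Fin M → ZMod q =>
            ((∑ i, f i = 0) ∧ wt q f = b) ∨ (¬ (∑ i, f i = 0) ∧ wt q f + 1 = b))).card
        = (Finset.univ.filter (fun f : Fin M → ZMod q =>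
            (∑ i, f i = 0) ∧ wt q f = b)).card
          + (Finset.univ.filter (fun f : Fin M → ZMod q =>
            ¬ (∑ i, f i = 0) ∧ wt q f + 1 = b)).card := by
      rw [Finset.filter_or]
      apply Finset.card_union_of_disjoint
      rw [Finset.disjoint_left]
      intro f h1 h2
      rw [Finset.mem_filter] at h1 h2
      exact h2.2.1 h1.2.1
    rw [hor, ih b]
    match b with
    | 0 =>
      rw [Finset.filter_false_of_mem (fun f _ h => Nat.succ_ne_zero _ h.2),
        Finset.card_empty]
      simp
    | (b'+1) =>
      -- count of { Σ ≠ 0 ∧ wt = b' } = W(M,b') − N(M,b')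
      have hcompl : (Finset.univ.filter (fun f : Fin M → ZMod q =>
            ¬ (∑ i, f i = 0) ∧ wt q f + 1 = b'+1)).card
          + M.choose b' * Kcard q b' = M.choose b' * (q-1)^b' := by
        have e0 : (Finset.univ.filter (fun f : Fin M → ZMod q =>
            ¬ (∑ i, f i = 0) ∧ wt q f + 1 = b'+1))
            = (Finset.univ.filter (fun f : Fin M → ZMod q => wt q f = b')).filter
                (fun f => ¬ (∑ i, f i = 0)) := by
          rw [Finset.filter_filter]
          apply Finset.filter_congr
          intro f _
          constructor
          · intro h
            exact ⟨Nat.add_right_cancel h.2, h.1⟩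
          · intro h
            exact ⟨h.2, by rw [h.1]⟩
        have e1 : (Finset.univ.filter (fun f : Fin M → ZMod q =>
            (∑ i, f i = 0) ∧ wt q f = b'))
            = (Finset.univ.filter (fun f : Fin M → ZMod q => wt q f = b')).filter
                (fun f => (∑ i, f i = 0)) := by
          rw [Finset.filter_filter]
          apply Finset.filter_congr
          intro f _
          exact and_comm
        rw [e0, ← Wcard q M b', ← ih b', e1, add_comm]
        exact Finset.card_filter_add_card_filter_not _
      have hKrec : Kcard q (b'+1) + Kcard q b' = (q-1)^b' := Kcard_rec q b'
      have hmul : M.choose b' * Kcard q (b'+1) + M.choose b' * Kcard q b'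
          = M.choose b' * (q-1)^b' := by
        rw [← Nat.mul_add, hKrec]
      have hP : M.choose (b'+1) * Kcard q (b'+1) + M.choose b' * Kcard q (b'+1)
          = (M+1).choose (b'+1) * Kcard q (b'+1) := by
        rw [← Nat.add_mul, Nat.choose_succ_succ']
        ring
      linarith [hcompl, hmul, hP]

end Counting

section Bij
variable {q n : ℕ} [NeZero q] (x0 : Fin q)

/-- difference vector of the extended word, over `ZMod q`. -/
def dvec (x : Fin n → Fin q) : Fin (n+1) → ZMod q :=
  fun k => (((Ynat x0 x0 x ((k : ℕ)+1)).val : ℕ) : ZMod q)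
    - (((Ynat x0 x0 x (k : ℕ)).val : ℕ) : ZMod q)

lemma sum_dvec (x : Fin n → Fin q) : ∑ k, dvec x0 x k = 0 := by
  simp only [dvec]
  rw [Fin.sum_univ_eq_sum_range
    (fun t => (((Ynat x0 x0 x (t+1)).val : ℕ) : ZMod q)
      - (((Ynat x0 x0 x t).val : ℕ) : ZMod q)) (n+1)]
  rw [Finset.sum_range_sub (fun t => (((Ynat x0 x0 x t).val : ℕ) : ZMod q))]
  rw [Ynat_last, Ynat_zero]
  exact sub_self _

lemma castinj : ∀ a b : Fin q, ((a.val : ℕ) : ZMod q) = ((b.val : ℕ) : ZMod q) → a = b := by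
  intro a b h
  have h2 := congrArg ZMod.val h
  rw [ZMod.val_cast_of_lt a.is_lt, ZMod.val_cast_of_lt b.is_lt] at h2
  exact Fin.ext h2

lemma dvec_eq_zero_iff (x : Fin n → Fin q) (k : Fin (n+1)) :
    dvec x0 x k = 0 ↔ ind x0 x0 x (k : ℕ) = 0 := by
  rw [dvec, sub_eq_zero, ind]
  constructor
  · intro h
    rw [if_pos (castinj _ _ h.symm)]
  · intro h
    by_cases he : Ynat x0 x0 x (k : ℕ) = Ynat x0 x0 x ((k : ℕ)+1)
    · rw [he]
    · rw [if_neg he] at h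
      exact absurd h one_ne_zero

lemma wt_dvec (x : Fin n → Fin q) : wt q (dvec x0 x) = bcount x0 x0 x := by
  rw [wt, bcount, ← Fin.sum_univ_eq_sum_range (fun t => ind x0 x0 x t) (n+1)]
  refine Finset.sum_congr rfl (fun k _ => ?_)
  by_cases h : dvec x0 x k = 0
  · rw [if_pos h, ((dvec_eq_zero_iff x0 x k).mp h).symm]
  · rw [if_neg h]
    have h2 : ind x0 x0 x (k : ℕ) ≠ 0 := fun h0 => h ((dvec_eq_zero_iff x0 x k).mpr h0)
    rw [ind] at h2 ⊢
    by_cases he : Ynat x0 x0 x (k : ℕ) = Ynat x0 x0 x ((k : ℕ)+1)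
    · exact absurd (if_pos he) h2
    · rw [if_neg he]

lemma dvec_inj (x x' : Fin n → Fin q) (h : dvec x0 x = dvec x0 x') : x = x' := by
  have hg : ∀ k, k ≤ n + 1 →
      (((Ynat x0 x0 x k).val : ℕ) : ZMod q) = (((Ynat x0 x0 x' k).val : ℕ) : ZMod q) := by
    intro k
    induction k with
    | zero => intro _; rw [Ynat_zero, Ynat_zero]
    | succ t iht =>
      intro ht
      have h1 : t < n + 1 := by omega
      have e1 : (((Ynat x0 x0 x (t+1)).val : ℕ) : ZMod q)
          = (((Ynat x0 x0 x t).val : ℕ) : ZMod q) + dvec x0 x ⟨t, h1⟩ := by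
        rw [dvec]
        ring
      have e2 : (((Ynat x0 x0 x' (t+1)).val : ℕ) : ZMod q)
          = (((Ynat x0 x0 x' t).val : ℕ) : ZMod q) + dvec x0 x' ⟨t, h1⟩ := by
        rw [dvec]
        ring
      rw [e1, e2, iht (by omega), h]
  apply eq_of_Ynat_eq x0 x0
  intro k hk
  exact castinj _ _ (hg k hk)

lemma dvec_surj (e : Fin (n+1) → ZMod q) (hsum : ∑ i, e i = 0) :
    ∃ x : Fin n → Fin q, dvec x0 x = e := by
  set E : ℕ → ZMod q := fun i => if h : i < n+1 then e ⟨i, h⟩ else 0 with hE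
  set G : ℕ → ZMod q := fun t => ((x0.val : ℕ) : ZMod q) + ∑ i ∈ Finset.range t, E i with hG
  set xx : Fin n → Fin q := fun j => ⟨(G ((j : ℕ)+1)).val, ZMod.val_lt _⟩ with hxx
  refine ⟨xx, ?_⟩
  have hEe : ∀ k : Fin (n+1), E (k : ℕ) = e k := by
    intro k
    rw [hE]
    simp only [k.is_lt, dif_pos]
  have hCY : ∀ k, k ≤ n + 1 →
      (((Ynat x0 x0 xx k).val : ℕ) : ZMod q) = G k := by
    intro k hk
    match k, hk with
    | 0, _ =>
      rw [Ynat_zero, hG]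
      simp
    | (t+1), ht =>
      rcases Nat.lt_or_ge t n with h | h
      · rw [Ynat_mid x0 x0 xx t h, hxx]
        rw [ZMod.natCast_val, ZMod.cast_id]
      · rw [show t = n from by omega]
        rw [Ynat_last]
        have hsum2 : ∑ i ∈ Finset.range (n+1), E i = 0 := by
          rw [← Fin.sum_univ_eq_sum_range E (n+1)]
          rw [Finset.sum_congr rfl (fun k _ => hEe k)]
          exact hsum
        rw [hG]
        simp only [hsum2, add_zero]
  funext k
  have h1 : (k : ℕ) ≤ n + 1 := by omega
  have h2 : (k : ℕ) + 1 ≤ n + 1 := by omega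
  rw [dvec, hCY _ h2, hCY _ h1]
  have h3 : G ((k : ℕ) + 1) = G (k : ℕ) + E (k : ℕ) := by
    rw [hG]
    simp [Finset.sum_range_succ, add_assoc]
  rw [h3, hEe k]
  ring

lemma card_bcount (b : ℕ) :
    (Finset.univ.filter (fun x : Fin n → Fin q => bcount x0 x0 x = b)).card
      = (n+1).choose b * Kcard q b := by
  rw [← Ncard q (n+1) b]
  apply Finset.card_bij (fun x _ => dvec x0 x)
  · intro x hx
    rw [Finset.mem_filter] at hx ⊢
    refine ⟨Finset.mem_univ _, sum_dvec x0 x, ?_⟩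
    rw [wt_dvec]
    exact hx.2
  · intro x1 h1 x2 h2 h
    exact dvec_inj x0 x1 x2 h
  · intro e he
    rw [Finset.mem_filter] at he
    obtain ⟨-, hsum, hwt⟩ := he
    obtain ⟨x, hx⟩ := dvec_surj x0 e hsum
    refine ⟨x, ?_, hx⟩
    rw [Finset.mem_filter]
    refine ⟨Finset.mem_univ _, ?_⟩
    rw [← wt_dvec x0 x, hx, hwt]

end Bij

section RealAlgebra

lemma binom_aux (m : ℕ) (t : ℝ) :
    ∑ b ∈ Finset.range (m+1), ((m+1).choose (b+1) : ℝ) * t^(b+1) = (t+1)^(m+1) - 1 := by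
  have h := add_pow t 1 (m+1)
  rw [Finset.sum_range_succ'] at h
  simp only [one_pow, mul_one, pow_zero, Nat.choose_zero_right, Nat.cast_one, one_mul] at h
  rw [Finset.sum_congr rfl
    (fun b _ => mul_comm (((m+1).choose (b+1) : ℝ)) (t^(b+1)))]
  linarith [h]

lemma Kreal (q : ℕ) [NeZero q] (hq : 2 ≤ q) (b : ℕ) :
    (q:ℝ) * (Kcard q b : ℝ) = ((q:ℝ)-1)^b + (-1)^b * ((q:ℝ)-1) := by
  induction b with
  | zero =>
    rw [Kcard_zero]
    push_cast
    ring
  | succ b ih =>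
    have hrec := Kcard_rec q b
    have hcast : (Kcard q (b+1) : ℝ) + (Kcard q b : ℝ) = ((q:ℝ)-1)^b := by
      have h2 : ((Kcard q (b+1) + Kcard q b : ℕ) : ℝ) = (((q-1)^b : ℕ) : ℝ) := by
        rw [hrec]
      push_cast [Nat.cast_sub (show 1 ≤ q by omega)] at h2
      exact h2
    calc (q:ℝ) * (Kcard q (b+1) : ℝ)
        = (q:ℝ) * ((Kcard q (b+1) : ℝ) + (Kcard q b : ℝ)) - (q:ℝ) * (Kcard q b : ℝ) := by ring
      _ = (q:ℝ) * ((q:ℝ)-1)^b - (((q:ℝ)-1)^b + (-1)^b * ((q:ℝ)-1)) := by rw [hcast, ih]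
      _ = ((q:ℝ)-1)^(b+1) + (-1)^(b+1) * ((q:ℝ)-1) := by ring

lemma sum_lower (q n : ℕ) [NeZero q] (hq : 2 ≤ q) :
    (q : ℝ)^(n+1) / (((q:ℝ) - 1) * ((n:ℝ)+2))
      ≤ ∑ b ∈ Finset.range (n+2), (((n+1).choose b * Kcard q b : ℕ) : ℝ) / ((b:ℝ)+1) := by
  have hQ2 : (2:ℝ) ≤ (q:ℝ) := by exact_mod_cast hq
  set E := ∑ b ∈ Finset.range (n+2), (((n+1).choose b * Kcard q b : ℕ) : ℝ) / ((b:ℝ)+1)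
    with hE
  have hkey : ((q:ℝ) * ((n:ℝ)+2)) * E
      = ∑ b ∈ Finset.range (n+2),
          ((n+2).choose (b+1) : ℝ) * (((q:ℝ)-1)^b + (-1)^b * ((q:ℝ)-1)) := by
    rw [hE, Finset.mul_sum]
    refine Finset.sum_congr rfl (fun b _ => ?_)
    have hch : ((n+2) * ((n+1).choose b) : ℕ) = ((n+2).choose (b+1)) * (b+1) :=
      Nat.add_one_mul_choose_eq (n+1) b
    have hchR : ((n:ℝ)+2) * (((n+1).choose b : ℕ) : ℝ)
        = (((n+2).choose (b+1) : ℕ) : ℝ) * ((b:ℝ)+1) := by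
      exact_mod_cast hch
    have hKr := Kreal q hq b
    have hb1 : ((b:ℝ)+1) ≠ 0 := by positivity
    push_cast
    calc (q:ℝ) * ((n:ℝ)+2) * (((n+1).choose b : ℝ) * (Kcard q b : ℝ) / ((b:ℝ)+1))
        = (((n:ℝ)+2) * ((n+1).choose b : ℝ)) / ((b:ℝ)+1) * ((q:ℝ) * (Kcard q b : ℝ)) := by
          ring
      _ = ((((n+2).choose (b+1) : ℕ) : ℝ) * ((b:ℝ)+1)) / ((b:ℝ)+1)
            * ((q:ℝ) * (Kcard q b : ℝ)) := by rw [← hchR]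
      _ = ((n+2).choose (b+1) : ℝ) * ((q:ℝ) * (Kcard q b : ℝ)) := by
          rw [mul_div_assoc, div_self hb1, mul_one]
      _ = ((n+2).choose (b+1) : ℝ) * (((q:ℝ)-1)^b + (-1)^b * ((q:ℝ)-1)) := by rw [hKr]
  have hS1 : ((q:ℝ)-1) * ∑ b ∈ Finset.range (n+2), ((n+2).choose (b+1) : ℝ) * ((q:ℝ)-1)^b
      = (q:ℝ)^(n+2) - 1 := by
    rw [Finset.mul_sum]
    rw [Finset.sum_congr rfl (fun b _ => by
      rw [show ((q:ℝ)-1) * (((n+2).choose (b+1) : ℝ) * ((q:ℝ)-1)^b)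
          = ((n+2).choose (b+1) : ℝ) * ((q:ℝ)-1)^(b+1) from by ring])]
    rw [binom_aux (n+1) ((q:ℝ)-1)]
    norm_num
  have hS2 : ∑ b ∈ Finset.range (n+2), ((n+2).choose (b+1) : ℝ) * (-1:ℝ)^b = 1 := by
    have h := binom_aux (n+1) (-1 : ℝ)
    rw [show ((-1:ℝ)+1) = 0 from by ring, zero_pow (by omega : n+2 ≠ 0)] at h
    have h2 : ∑ b ∈ Finset.range (n+2), ((n+2).choose (b+1) : ℝ) * (-1:ℝ)^(b+1)
        = - ∑ b ∈ Finset.range (n+2), ((n+2).choose (b+1) : ℝ) * (-1:ℝ)^b := by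
      rw [← Finset.sum_neg_distrib]
      exact Finset.sum_congr rfl (fun b _ => by ring)
    rw [h2] at h
    linarith
  have hsplit : ∑ b ∈ Finset.range (n+2),
        ((n+2).choose (b+1) : ℝ) * (((q:ℝ)-1)^b + (-1)^b * ((q:ℝ)-1))
      = (∑ b ∈ Finset.range (n+2), ((n+2).choose (b+1) : ℝ) * ((q:ℝ)-1)^b)
        + ((q:ℝ)-1) * ∑ b ∈ Finset.range (n+2), ((n+2).choose (b+1) : ℝ) * (-1:ℝ)^b := by
    rw [Finset.mul_sum, ← Finset.sum_add_distrib]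
    exact Finset.sum_congr rfl (fun b _ => by ring)
  rw [hsplit, hS2, mul_one] at hkey
  -- so ((q-1)) * (q (n+2) E) = (q^{n+2} - 1) + (q-1)^2
  have hmain : ((q:ℝ)-1) * (((q:ℝ) * ((n:ℝ)+2)) * E)
      = ((q:ℝ)^(n+2) - 1) + ((q:ℝ)-1)^2 := by
    rw [hkey]
    rw [mul_add, hS1]
    ring
  rw [div_le_iff₀ (by nlinarith : (0:ℝ) < ((q:ℝ)-1) * ((n:ℝ)+2))]
  have hq1 : (1:ℝ) ≤ ((q:ℝ)-1)^2 := by nlinarith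
  have hpow : (q:ℝ)^(n+2) = (q:ℝ)^(n+1) * (q:ℝ) := pow_succ _ _
  have hQ0 : (0:ℝ) < (q:ℝ) := by linarith
  have h3 : (q:ℝ) * ((q:ℝ)^(n+1)) ≤ (q:ℝ) * (E * (((q:ℝ)-1) * ((n:ℝ)+2))) := by
    nlinarith [hmain]
  exact le_of_mul_le_mul_left h3 hQ0

end RealAlgebra

section Assemble
variable {q n : ℕ}

/-- fibers of the code construction: fixed boundary count `b` and syndrome residue `c`. -/
def fib (x0 : Fin q) (b c : ℕ) : Finset (Fin n → Fin q) :=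
  (Finset.univ.filter (fun x => bcount x0 x0 x = b)).filter
    (fun x => Ssyn x0 x0 x % (b+1) = c)

lemma mem_fib {x0 : Fin q} {b c : ℕ} {x : Fin n → Fin q} (h : x ∈ fib x0 b c) :
    bcount x0 x0 x = b ∧ Ssyn x0 x0 x % (b+1) = c := by
  rw [fib, Finset.mem_filter, Finset.mem_filter] at h
  exact ⟨h.1.2, h.2⟩

lemma exists_good_fiber (x0 : Fin q) (b : ℕ) :
    ∃ c, (Finset.univ.filter (fun x : Fin n → Fin q => bcount x0 x0 x = b)).card
      ≤ (b+1) * (fib (n := n) x0 b c).card := by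
  classical
  set s := Finset.univ.filter (fun x : Fin n → Fin q => bcount x0 x0 x = b) with hs
  have hfib_eq : ∀ c, fib (n := n) x0 b c = s.filter (fun x => Ssyn x0 x0 x % (b+1) = c) :=
    fun c => by rw [fib, hs]
  have hsc : s.card
      = ∑ c ∈ Finset.range (b+1), (fib (n := n) x0 b c).card := by
    rw [Finset.card_eq_sum_card_fiberwise
      (f := fun x => Ssyn x0 x0 x % (b+1)) (t := Finset.range (b+1))
      (fun x _ => Finset.mem_range.mpr (Nat.mod_lt _ (by omega)))]
    exact Finset.sum_congr rfl (fun c _ => by rw [hfib_eq c])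
  have hne : (Finset.range (b+1)).Nonempty := Finset.nonempty_range_iff.mpr (by omega)
  have hle : ∑ _c ∈ Finset.range (b+1), s.card
      ≤ ∑ c ∈ Finset.range (b+1), (b+1) * (fib (n := n) x0 b c).card := by
    rw [Finset.sum_const, Finset.card_range, ← Finset.mul_sum, ← hsc, smul_eq_mul]
  obtain ⟨c, -, hc⟩ := Finset.exists_le_of_sum_le hne hle
  exact ⟨c, hc⟩

end Assemble
end Stmt0


/-- For every `q ≥ 2`, `n ≥ 1` and boundary symbol `x₀`, there
exist a boundary symbol `x_{n+1}` and a code `C ⊆ Σ_q^n` with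
`|C| ≥ q^{n+1} / ((q−1)(n+2))` that is a single-deletion labeling code for the
pair-read labeling with boundary symbols `x₀, x_{n+1}`. -/
theorem stmt0 (q n : ℕ) (hq : 2 ≤ q) (hn : 1 ≤ n) (x0 : Fin q) :
    ∃ (xe : Fin q) (C : Set (Fin n → Fin q)),
      (q : ℝ) ^ (n + 1) / (((q : ℝ) - 1) * ((n : ℝ) + 2)) ≤ (C.ncard : ℝ) ∧
      ∀ x ∈ C, ∀ x' ∈ C, x ≠ x' →
        ∀ v : List (Fin q × Fin q),
          v ∈ delBall1 (pairLabel x0 xe x) → v ∈ delBall1 (pairLabel x0 xe x') → False := by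
  classical
  haveI : NeZero q := ⟨by omega⟩
  refine ⟨x0, ?_⟩
  choose cb hcb using Stmt0.exists_good_fiber (n := n) x0
  set Cf : Finset (Fin n → Fin q) :=
    (Finset.range (n+2)).biUnion (fun b => Stmt0.fib (n := n) x0 b (cb b)) with hCf
  have hmem : ∀ x ∈ Cf, Stmt0.Ssyn x0 x0 x % (Stmt0.bcount x0 x0 x + 1)
      = cb (Stmt0.bcount x0 x0 x) := by
    intro x hx
    rw [hCf, Finset.mem_biUnion] at hx
    obtain ⟨b, -, hb⟩ := hx
    obtain ⟨h1, h2⟩ := Stmt0.mem_fib hb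
    rw [h1]
    exact h2
  refine ⟨(↑Cf : Set (Fin n → Fin q)), ?_, ?_⟩
  · -- cardinality bound
    rw [Set.ncard_coe_finset]
    have hdisj : Cf.card = ∑ b ∈ Finset.range (n+2), (Stmt0.fib (n := n) x0 b (cb b)).card := by
      rw [hCf]
      apply Finset.card_biUnion
      intro b _ b' _ hbb
      rw [Function.onFun, Finset.disjoint_left]
      intro x hx hx'
      exact hbb ((Stmt0.mem_fib hx).1.symm.trans (Stmt0.mem_fib hx').1)
    have hterm : ∀ b ∈ Finset.range (n+2),
        (((n+1).choose b * Stmt0.Kcard q b : ℕ) : ℝ) / ((b:ℝ)+1)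
          ≤ ((Stmt0.fib (n := n) x0 b (cb b)).card : ℝ) := by
      intro b _
      rw [div_le_iff₀ (by positivity : (0:ℝ) < (b:ℝ)+1)]
      have h := hcb b
      rw [Stmt0.card_bcount x0 b] at h
      calc (((n+1).choose b * Stmt0.Kcard q b : ℕ) : ℝ)
          ≤ (((b+1) * (Stmt0.fib (n := n) x0 b (cb b)).card : ℕ) : ℝ) := by exact_mod_cast h
        _ = ((Stmt0.fib (n := n) x0 b (cb b)).card : ℝ) * ((b:ℝ)+1) := by push_cast; ring
    calc (q : ℝ)^(n+1) / (((q:ℝ) - 1) * ((n:ℝ)+2))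
        ≤ ∑ b ∈ Finset.range (n+2),
            (((n+1).choose b * Stmt0.Kcard q b : ℕ) : ℝ) / ((b:ℝ)+1) :=
          Stmt0.sum_lower q n hq
      _ ≤ ∑ b ∈ Finset.range (n+2), ((Stmt0.fib (n := n) x0 b (cb b)).card : ℝ) :=
          Finset.sum_le_sum hterm
      _ = ((Cf.card : ℕ) : ℝ) := by rw [hdisj]; push_cast; rfl
  · -- single-deletion labeling code property
    intro x hx x' hx' hxne v hv hv'
    rw [Finset.mem_coe] at hx hx'
    have hcode : ∀ y y' : Fin n → Fin q, y ∈ Cf → y' ∈ Cf →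
        (y = y' ∨ (Stmt0.bcount x0 x0 y' = Stmt0.bcount x0 x0 y ∧
          ∃ m, 0 < m ∧ m ≤ Stmt0.bcount x0 x0 y ∧
            Stmt0.Ssyn x0 x0 y = Stmt0.Ssyn x0 x0 y' + m)) →
        y = y' := by
      intro y y' hy hy' hd
      rcases hd with h | ⟨hbc, m, hm0, hmb, hS⟩
      · exact h
      · exfalso
        have h1 := hmem y hy
        have h2 := hmem y' hy'
        rw [hbc] at h2
        have hmod : Stmt0.Ssyn x0 x0 y' % (Stmt0.bcount x0 x0 y + 1)
            = (Stmt0.Ssyn x0 x0 y' + m) % (Stmt0.bcount x0 x0 y + 1) := by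
          rw [← hS, h1, h2]
        have hdvd : (Stmt0.bcount x0 x0 y + 1) ∣ m := by
          have h3 := (Nat.modEq_iff_dvd' (Nat.le_add_right _ _)).mp hmod
          rwa [Nat.add_sub_cancel_left] at h3
        have h4 := Nat.le_of_dvd hm0 hdvd
        omega
    have hlx : (pairLabel x0 x0 x).length = n + 1 := Stmt0.pairLabel_length x0 x0 x
    have hlx' : (pairLabel x0 x0 x').length = n + 1 := Stmt0.pairLabel_length x0 x0 x'
    rw [delBall1, Set.mem_insert_iff, Set.mem_setOf_eq] at hv hv'
    rcases hv with hv | ⟨i, hi, hvi⟩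
    · rcases hv' with hv' | ⟨j, hj, hvj⟩
      · -- v = L x = L x'
        have heq : pairLabel x0 x0 x = pairLabel x0 x0 x' := hv.symm.trans hv'
        exact hxne (hcode x x' hx hx'
          (Stmt0.key x0 x0 x x' 0 0 (by omega) (by omega) le_rfl (by rw [heq])))
      · -- length mismatch
        rw [hlx'] at hj
        have hlen := congrArg List.length (hv.symm.trans hvj)
        rw [hlx, List.length_eraseIdx, hlx', if_pos hj] at hlen
        omega
    · rcases hv' with hv' | ⟨j, hj, hvj⟩
      · rw [hlx] at hi
        have hlen := congrArg List.length (hv'.symm.trans hvi)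
        rw [hlx', List.length_eraseIdx, hlx, if_pos hi] at hlen
        omega
      · rw [hlx] at hi
        rw [hlx'] at hj
        have heq : (pairLabel x0 x0 x).eraseIdx i = (pairLabel x0 x0 x').eraseIdx j :=
          hvi.symm.trans hvj
        rcases le_total i j with h | h
        · exact hxne (hcode x x' hx hx' (Stmt0.key x0 x0 x x' i j hi hj h heq))
        · exact hxne ((hcode x' x hx' hx
            (Stmt0.key x0 x0 x' x j i hj hi h heq.symm)).symm)
end

section
/- Let m ≥ 3 and let C ⊆ {0,1}^m be a zero-deletion code. Then |C| ≤ 2^{m+2}/(m−2). -/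
/-- Lists obtained from `u` by deleting a single coordinate equal to `0`. -/
def zeroDelBall {q : ℕ} [NeZero q] (u : List (Fin q)) : Set (List (Fin q)) :=
  {v | ∃ i, ∃ h : i < u.length, u[i] = 0 ∧ v = u.eraseIdx i}


namespace ZD

abbrev W := List (Fin 2)

lemma fin2 (x : Fin 2) : x = 0 ∨ x = 1 := by revert x; decide

lemma getD_lt {w : W} {i : ℕ} (h : i < w.length) : w.getD i (1:Fin 2) = w[i] := by
  simp [List.getD_eq_getElem?_getD, List.getElem?_eq_getElem h]

def allW (n : ℕ) : Finset W := (Finset.univ : Finset (Fin n → Fin 2)).image (fun f => List.ofFn f)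

lemma mem_allW {n : ℕ} {l : W} : l ∈ allW n ↔ l.length = n := by
  constructor
  · rintro h
    simp only [allW, Finset.mem_image] at h
    obtain ⟨f, -, rfl⟩ := h
    simp
  · rintro rfl
    simp only [allW, Finset.mem_image]
    refine ⟨fun i => l[(i:ℕ)], Finset.mem_univ _, ?_⟩
    exact List.ofFn_getElem (xs := l)

lemma card_allW (n : ℕ) : (allW n).card = 2 ^ n := by
  rw [allW, Finset.card_image_of_injective _ (List.ofFn_injective), Finset.card_univ]
  simp

def startsF (w : W) : Finset ℕ :=
  (Finset.range w.length).filter (fun i => w.getD i 1 = 0 ∧ (i = 0 ∨ w.getD (i-1) 1 = 1))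

def endsF (w : W) : Finset ℕ :=
  (Finset.range w.length).filter (fun i => w.getD i 1 = 0 ∧ (i + 1 = w.length ∨ w.getD (i+1) 1 = 1))

lemma mem_startsF {w : W} {i : ℕ} :
    i ∈ startsF w ↔ i < w.length ∧ w.getD i 1 = 0 ∧ (i = 0 ∨ w.getD (i-1) 1 = 1) := by
  simp [startsF, and_assoc]

lemma mem_endsF {w : W} {i : ℕ} :
    i ∈ endsF w ↔ i < w.length ∧ w.getD i 1 = 0 ∧ (i + 1 = w.length ∨ w.getD (i+1) 1 = 1) := by
  simp [endsF, and_assoc]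

-- injectivity of eraseIdx on starts
lemma starts_inj {w : W} {i j : ℕ} (hi : i ∈ startsF w) (hj : j ∈ startsF w)
    (h : w.eraseIdx i = w.eraseIdx j) : i = j := by
  rcases mem_startsF.1 hi with ⟨hi1, hi2, hi3⟩
  rcases mem_startsF.1 hj with ⟨hj1, hj2, hj3⟩
  by_contra hne
  -- wlog i < j
  rcases Nat.lt_or_ge i j with hlt | hge
  · -- evaluate at j-1
    have hj0 : j ≠ 0 := by omega
    have hj3' : w.getD (j-1) 1 = 1 := by tauto
    have hlen : (w.eraseIdx i).length = w.length - 1 := List.length_eraseIdx_of_lt hi1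
    have hjl : j - 1 < (w.eraseIdx i).length := by omega
    have e1 : (w.eraseIdx i)[j-1] = w[j]'hj1 := by
      rw [List.getElem_eraseIdx_of_ge hjl (by omega)]
      congr 1; omega
    have hjl2 : j - 1 < (w.eraseIdx j).length := by
      rw [List.length_eraseIdx_of_lt hj1]; omega
    have e2 : (w.eraseIdx j)[j-1] = w[j-1]'(by omega) := by
      rw [List.getElem_eraseIdx_of_lt hjl2 (by omega)]
    have : w[j]'hj1 = w[j-1]'(by omega) := by
      rw [← e1, ← e2]; congr 1
    rw [getD_lt hj1] at hj2
    rw [getD_lt (show j-1 < w.length by omega)] at hj3'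
    rw [hj2, hj3'] at this
    exact absurd this (by decide)
  · have hlt : j < i := by omega
    have hi0 : i ≠ 0 := by omega
    have hi3' : w.getD (i-1) 1 = 1 := by tauto
    have hil : i - 1 < (w.eraseIdx j).length := by
      rw [List.length_eraseIdx_of_lt hj1]; omega
    have e1 : (w.eraseIdx j)[i-1] = w[i]'hi1 := by
      rw [List.getElem_eraseIdx_of_ge hil (by omega)]
      congr 1; omega
    have hil2 : i - 1 < (w.eraseIdx i).length := by
      rw [List.length_eraseIdx_of_lt hi1]; omega
    have e2 : (w.eraseIdx i)[i-1] = w[i-1]'(by omega) := by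
      rw [List.getElem_eraseIdx_of_lt hil2 (by omega)]
    have him : i - 1 < w.length := by omega
    have hv0 : w[i]'hi1 = 0 := by rw [← getD_lt hi1]; exact hi2
    have hv1 : w[i-1]'him = 1 := by rw [← getD_lt him]; exact hi3'
    have : w[i]'hi1 = w[i-1]'him := by
      rw [← e1, ← e2]; congr 1; exact h.symm
    rw [hv0, hv1] at this
    exact absurd this (by decide)

end ZD

namespace ZD

lemma ends_inj {w : W} {i j : ℕ} (hi : i ∈ endsF w) (hj : j ∈ endsF w)
    (h : w.eraseIdx i = w.eraseIdx j) : i = j := by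
  rcases mem_endsF.1 hi with ⟨hi1, hi2, hi3⟩
  rcases mem_endsF.1 hj with ⟨hj1, hj2, hj3⟩
  by_contra hne
  -- wlog general helper: if i < j derive contradiction
  have main : ∀ i j : ℕ, i < j →
      (hi1 : i < w.length) → (hj1 : j < w.length) →
      w.getD i 1 = 0 → (i + 1 = w.length ∨ w.getD (i+1) 1 = 1) →
      w.getD j 1 = 0 → w.eraseIdx i = w.eraseIdx j → False := by
    intro i j hlt hi1 hj1 hi2 hi3 hj2 heq
    have hsucc : i + 1 < w.length := by omega
    have hi3' : w.getD (i+1) 1 = 1 := by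
      rcases hi3 with h' | h'
      · omega
      · exact h'
    have hil : i < (w.eraseIdx i).length := by
      rw [List.length_eraseIdx_of_lt hi1]; omega
    have hil2 : i < (w.eraseIdx j).length := by
      rw [List.length_eraseIdx_of_lt hj1]; omega
    have e1 : (w.eraseIdx i)[i]'hil = w[i+1]'hsucc := by
      rw [List.getElem_eraseIdx_of_ge hil (by omega)]
    have e2 : (w.eraseIdx j)[i]'hil2 = w[i]'hi1 := by
      rw [List.getElem_eraseIdx_of_lt hil2 (by omega)]
    have hv1 : w[i+1]'hsucc = 1 := by rw [← getD_lt hsucc]; exact hi3'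
    have hv0 : w[i]'hi1 = 0 := by rw [← getD_lt hi1]; exact hi2
    have : w[i+1]'hsucc = w[i]'hi1 := by
      rw [← e1, ← e2]; congr 1
    rw [hv0, hv1] at this
    exact absurd this (by decide)
  rcases Nat.lt_or_ge i j with hlt | hge
  · exact main i j hlt hi1 hj1 hi2 hi3 hj2 h
  · exact main j i (by omega) hj1 hi1 hj2 hj3 hi2 h.symm

end ZD

namespace ZD

def SF (w : W) : Finset ℕ := startsF w ∪ (endsF w).image (· + 1)

def ballF (w : W) : Finset W := (startsF w ∪ endsF w).image (fun i => w.eraseIdx i)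

lemma starts_card_le (w : W) : (startsF w).card ≤ (ballF w).card := by
  calc (startsF w).card = ((startsF w).image (fun i => w.eraseIdx i)).card := by
        rw [Finset.card_image_of_injOn (fun i hi j hj h => starts_inj hi hj h)]
    _ ≤ (ballF w).card := Finset.card_le_card
        (Finset.image_subset_image Finset.subset_union_left)

lemma ends_card_le (w : W) : (endsF w).card ≤ (ballF w).card := by
  calc (endsF w).card = ((endsF w).image (fun i => w.eraseIdx i)).card := by
        rw [Finset.card_image_of_injOn (fun i hi j hj h => ends_inj hi hj h)]
    _ ≤ (ballF w).card := Finset.card_le_card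
        (Finset.image_subset_image Finset.subset_union_right)

lemma SF_card_le (w : W) : (SF w).card ≤ 2 * (ballF w).card := by
  have hdisj : Disjoint (startsF w) ((endsF w).image (· + 1)) := by
    rw [Finset.disjoint_left]
    intro a ha hb
    rcases Finset.mem_image.1 hb with ⟨y, hy, rfl⟩
    rcases mem_startsF.1 ha with ⟨h1, h2, h3⟩
    rcases mem_endsF.1 hy with ⟨g1, g2, g3⟩
    have : w.getD (y + 1 - 1) 1 = 1 := by
      rcases h3 with h' | h'
      · omega
      · exact h'
    simp only [Nat.add_sub_cancel] at this
    rw [g2] at this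
    exact absurd this (by decide)
  rw [SF, Finset.card_union_of_disjoint hdisj,
    Finset.card_image_of_injective _ (fun a b h => by omega)]
  have := starts_card_le w
  have := ends_card_le w
  omega

lemma SF_subset (w : W) : SF w ⊆ Finset.range (w.length + 1) := by
  intro a ha
  rcases Finset.mem_union.1 ha with h | h
  · rcases mem_startsF.1 h with ⟨h1, -⟩
    exact Finset.mem_range.2 (by omega)
  · rcases Finset.mem_image.1 h with ⟨y, hy, rfl⟩
    rcases mem_endsF.1 hy with ⟨h1, -⟩
    exact Finset.mem_range.2 (by omega)

end ZD

namespace ZD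

lemma ballF_sub_zdb {w : W} {v : W} (hv : v ∈ ballF w) : v ∈ zeroDelBall w := by
  rcases Finset.mem_image.1 hv with ⟨i, hi, rfl⟩
  have h : i < w.length ∧ w.getD i 1 = 0 := by
    rcases Finset.mem_union.1 hi with h | h
    · rcases mem_startsF.1 h with ⟨h1, h2, -⟩; exact ⟨h1, h2⟩
    · rcases mem_endsF.1 h with ⟨h1, h2, -⟩; exact ⟨h1, h2⟩
  refine ⟨i, h.1, ?_, rfl⟩
  rw [← getD_lt h.1]; exact h.2

lemma ballF_len {w : W} {v : W} (hv : v ∈ ballF w) : v.length = w.length - 1 := by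
  rcases Finset.mem_image.1 hv with ⟨i, hi, rfl⟩
  have h : i < w.length := by
    rcases Finset.mem_union.1 hi with h | h
    · exact (mem_startsF.1 h).1
    · exact (mem_endsF.1 h).1
  exact List.length_eraseIdx_of_lt h

end ZD

namespace ZD

def P (w : W) (i : ℕ) : ℕ := ((SF w).filter (fun x => x ≤ i)).card

lemma mem_SF {w : W} {a : ℕ} :
    a ∈ SF w ↔ a ∈ startsF w ∨ ∃ y ∈ endsF w, y + 1 = a := by
  simp [SF]

lemma parity (w : W) : ∀ i, i < w.length → (w.getD i 1 = 0 ↔ P w i % 2 = 1) := by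
  intro i
  induction i with
  | zero =>
    intro h0
    have hfe : (SF w).filter (fun x => x ≤ 0) = (SF w).filter (fun x => x = 0) := by
      apply Finset.filter_congr
      intro x _
      simp only [decide_eq_true_eq, Nat.le_zero]
    have h0SF : 0 ∈ SF w ↔ w.getD 0 1 = 0 := by
      rw [mem_SF]
      constructor
      · rintro (h | ⟨y, hy, hy1⟩)
        · exact (mem_startsF.1 h).2.1
        · omega
      · intro hz
        exact Or.inl (mem_startsF.2 ⟨h0, hz, Or.inl rfl⟩)
    rw [P, hfe, Finset.filter_eq']
    rcases fin2 (w.getD 0 1) with hz | ho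
    · rw [if_pos (h0SF.2 hz)]
      exact ⟨fun _ => by simp, fun _ => hz⟩
    · rw [if_neg (fun hmem => by rw [h0SF.1 hmem] at ho; exact absurd ho (by decide))]
      simp only [Finset.card_empty]
      constructor
      · intro h'; rw [h'] at ho; exact absurd ho (by decide)
      · omega
  | succ i ih =>
    intro hsucc
    have hi : i < w.length := by omega
    have ihh := ih hi
    -- decompose the filter
    have hsplit : (SF w).filter (fun x => x ≤ i + 1)
        = (SF w).filter (fun x => x ≤ i) ∪ (SF w).filter (fun x => x = i + 1) := by
      ext x
      simp only [Finset.mem_union, Finset.mem_filter]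
      constructor
      · rintro ⟨hx, hle⟩
        rcases Nat.lt_or_ge x (i+1) with h' | h'
        · exact Or.inl ⟨hx, by omega⟩
        · exact Or.inr ⟨hx, by omega⟩
      · rintro (⟨hx, h'⟩ | ⟨hx, h'⟩) <;> exact ⟨hx, by omega⟩
    have hdisj : Disjoint ((SF w).filter (fun x => x ≤ i)) ((SF w).filter (fun x => x = i + 1)) := by
      rw [Finset.disjoint_left]
      intro a ha hb
      have h1 := (Finset.mem_filter.1 ha).2
      have h2 := (Finset.mem_filter.1 hb).2
      omega
    have hcard : P w (i+1) = P w i + ((SF w).filter (fun x => x = i + 1)).card := by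
      rw [P, hsplit, Finset.card_union_of_disjoint hdisj]; rfl
    -- membership characterization
    have hmem : i + 1 ∈ SF w ↔ (w.getD (i+1) 1 = 0 ∧ w.getD i 1 = 1) ∨
        (w.getD i 1 = 0 ∧ w.getD (i+1) 1 = 1) := by
      rw [mem_SF]
      constructor
      · rintro (h | ⟨y, hy, hy1⟩)
        · rcases mem_startsF.1 h with ⟨h1, h2, h3⟩
          refine Or.inl ⟨h2, ?_⟩
          rcases h3 with h' | h'
          · omega
          · simpa using h'
        · have hyi : y = i := by omega
          subst hyi
          rcases mem_endsF.1 hy with ⟨h1, h2, h3⟩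
          refine Or.inr ⟨h2, ?_⟩
          rcases h3 with h' | h'
          · omega
          · exact h'
      · rintro (⟨h1, h2⟩ | ⟨h1, h2⟩)
        · exact Or.inl (mem_startsF.2 ⟨hsucc, h1, Or.inr (by simpa using h2)⟩)
        · exact Or.inr ⟨i, mem_endsF.2 ⟨hi, h1, Or.inr h2⟩, rfl⟩
    rw [Finset.filter_eq'] at hcard
    rcases fin2 (w.getD i 1) with ha | ha <;> rcases fin2 (w.getD (i+1) 1) with hb | hb
    · -- 0,0 : i+1 ∉ SF
      have hnot : i + 1 ∉ SF w := by
        rw [hmem]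
        rintro (⟨h1, h2⟩ | ⟨h1, h2⟩)
        · rw [ha] at h2; exact absurd h2 (by decide)
        · rw [hb] at h2; exact absurd h2 (by decide)
      rw [if_neg hnot] at hcard
      simp only [Finset.card_empty, Nat.add_zero] at hcard
      rw [hcard, hb]
      rw [ha] at ihh
      simpa using ihh
    · -- a=0, b=1: i ∈ ends: parity flips odd -> even
      have hyes : i + 1 ∈ SF w := hmem.2 (Or.inr ⟨ha, hb⟩)
      rw [if_pos hyes] at hcard
      simp only [Finset.card_singleton] at hcard
      rw [hcard, hb]
      rw [ha] at ihh
      have := ihh.1 rfl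
      constructor
      · intro h'; exact absurd h' (by decide)
      · omega
    · -- a=1, b=0: start at i+1: flips even -> odd
      have hyes : i + 1 ∈ SF w := hmem.2 (Or.inl ⟨hb, ha⟩)
      rw [if_pos hyes] at hcard
      simp only [Finset.card_singleton] at hcard
      rw [hcard, hb]
      rw [ha] at ihh
      have hne : ¬ (P w i % 2 = 1) := fun h' => absurd (ihh.2 h') (by decide)
      constructor
      · intro _; omega
      · intro _; rfl
    · -- a=1, b=1: not in SF: stays even
      have hnot : i + 1 ∉ SF w := by
        rw [hmem]
        rintro (⟨h1, h2⟩ | ⟨h1, h2⟩)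
        · rw [hb] at h1; exact absurd h1 (by decide)
        · rw [ha] at h1; exact absurd h1 (by decide)
      rw [if_neg hnot] at hcard
      simp only [Finset.card_empty, Nat.add_zero] at hcard
      rw [hcard, hb]
      rw [ha] at ihh
      have hne : ¬ (P w i % 2 = 1) := fun h' => absurd (ihh.2 h') (by decide)
      constructor
      · intro h'; exact absurd h' (by decide)
      · intro h'; exact absurd h' hne

end ZD

namespace ZD

lemma SF_inj {w w' : W} (hl : w.length = w'.length) (hS : SF w = SF w') : w = w' := by
  apply List.ext_getElem hl
  intro i hi hi'
  have h1 := parity w i hi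
  have h2 := parity w' i hi'
  rw [getD_lt hi] at h1
  rw [getD_lt hi'] at h2
  have hP : P w i = P w' i := by rw [P, P, hS]
  rw [hP] at h1
  have hiff : (w[i] = 0 ↔ w'[i] = 0) := h1.trans h2.symm
  rcases fin2 w[i] with h | h <;> rcases fin2 w'[i] with h' | h'
  · rw [h, h']
  · exact absurd (hiff.1 h) (by rw [h']; decide)
  · exact absurd (hiff.2 h') (by rw [h]; decide)
  · rw [h, h']

end ZD

namespace ZD

lemma key (s r : ℕ) (hr2 : 2 ≤ r) (hr9 : r ≤ 9) :
    (8*s+r-2) * (s+1) * 4^(8*s+r+1) * 9^s ≤ (10-r) * 2^(8*s+r-1) * 3^(8*s+r+1) := by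
  induction s with
  | zero =>
    simp only [Nat.mul_zero, Nat.zero_add, pow_zero, Nat.mul_one]
    interval_cases r <;> norm_num
  | succ s ih =>
    rcases Nat.lt_or_ge s 2 with hs | hs
    · -- s+1 ∈ {1, 2}: explicit
      interval_cases s <;> interval_cases r <;> norm_num
    · -- induction step
      have hstep : 256 * ((8*(s+1)+r-2) * ((s+1)+1)) ≤ 729 * ((8*s+r-2) * (s+1)) := by
        zify [show (2:ℕ) ≤ 8*(s+1)+r by omega, show (2:ℕ) ≤ 8*s+r by omega]
        nlinarith [hs, hr2, hr9]
      calc (8*(s+1)+r-2) * ((s+1)+1) * 4^(8*(s+1)+r+1) * 9^(s+1)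
          = (2304 * 9^s * 4^(8*s+r+1)) * (256 * ((8*(s+1)+r-2) * ((s+1)+1))) := by
            rw [show 8*(s+1)+r+1 = (8*s+r+1)+8 from by omega, pow_add, pow_succ]
            ring
        _ ≤ (2304 * 9^s * 4^(8*s+r+1)) * (729 * ((8*s+r-2) * (s+1))) :=
            Nat.mul_le_mul_left _ hstep
        _ = 1679616 * ((8*s+r-2) * (s+1) * 4^(8*s+r+1) * 9^s) := by ring
        _ ≤ 1679616 * ((10-r) * 2^(8*s+r-1) * 3^(8*s+r+1)) := Nat.mul_le_mul_left _ ih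
        _ = (10-r) * 2^(8*(s+1)+r-1) * 3^(8*(s+1)+r+1) := by
            have e1 : 8*(s+1)+r-1 = (8*s+r-1) + 8 := by omega
            have e2 : 8*(s+1)+r+1 = (8*s+r+1) + 8 := by omega
            rw [e1, e2, pow_add, pow_add]
            ring

end ZD

namespace ZD

lemma tail_bound (n a : ℕ) (h : a ≤ n) :
    3^(n-a) * (∑ k ∈ Finset.range (a+1), n.choose k) ≤ 4^n := by
  calc 3^(n-a) * (∑ k ∈ Finset.range (a+1), n.choose k)
      = ∑ k ∈ Finset.range (a+1), 3^(n-a) * n.choose k := Finset.mul_sum _ _ _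
    _ ≤ ∑ k ∈ Finset.range (a+1), 3^(n-k) * n.choose k := by
        apply Finset.sum_le_sum
        intro k hk
        have hk' : k ≤ a := by simpa using Nat.lt_succ_iff.1 (Finset.mem_range.1 hk)
        exact Nat.mul_le_mul_right _ (Nat.pow_le_pow_right (by norm_num) (by omega))
    _ ≤ ∑ k ∈ Finset.range (n+1), 3^(n-k) * n.choose k := by
        apply Finset.sum_le_sum_of_subset
        exact Finset.range_subset_range.2 (by omega)
    _ = 4^n := by
        have := add_pow (R := ℕ) 1 3 n
        simp only [one_pow, one_mul] at this
        rw [show (4:ℕ) = 1 + 3 from rfl, this]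
        apply Finset.sum_congr rfl
        intro k hk
        push_cast
        ring

end ZD

/-- Let `m ≥ 3` and let `C ⊆ {0,1}^m` be a zero-deletion code.
Then `|C| ≤ 2^{m+2}/(m−2)`. -/
theorem stmt1 (m : ℕ) (hm : 3 ≤ m) (C : Set (List (Fin 2)))
    (hlen : ∀ c ∈ C, c.length = m)
    (hcode : ∀ c ∈ C, ∀ c' ∈ C, c ≠ c' →
      ∀ v, v ∈ zeroDelBall c → v ∈ zeroDelBall c' → False) :
    (C.ncard : ℝ) ≤ 2 ^ (m + 2) / ((m : ℝ) - 2) := by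
  classical
  set CF : Finset (List (Fin 2)) := (ZD.allW m).filter (fun l => l ∈ C) with hCFdef
  have hCF : ∀ {c}, c ∈ CF → c ∈ C := fun {c} h => (Finset.mem_filter.1 h).2
  have hCset : C = ↑CF := by
    ext x
    simp only [hCFdef, Finset.coe_filter, Set.mem_setOf_eq, ZD.mem_allW]
    constructor
    · intro hx; exact ⟨hlen x hx, hx⟩
    · rintro ⟨-, hx⟩; exact hx
  have hncard : C.ncard = CF.card := by rw [hCset, Set.ncard_coe_finset]
  set s : ℕ := (m+6)/8 - 1 with hsdef
  have hs1 : s + 1 = (m+6)/8 := by omega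
  set r : ℕ := m - 8*s with hrdef
  have hr2 : 2 ≤ r := by omega
  have hr9 : r ≤ 9 := by omega
  have hm8 : m = 8*s + r := by omega
  set CLow := CF.filter (fun c => (ZD.ballF c).card ≤ s) with hCLdef
  set CHigh := CF.filter (fun c => ¬ (ZD.ballF c).card ≤ s) with hCHdef
  have hsplit : CLow.card + CHigh.card = CF.card :=
    Finset.card_filter_add_card_filter_not _
  have hlenCF : ∀ c ∈ CF, c.length = m := fun c hc => hlen c (hCF hc)
  -- High bound
  have hH : (s+1) * CHigh.card ≤ 2^(m-1) := by
    have hdisj : ∀ c ∈ CHigh, ∀ c' ∈ CHigh, c ≠ c' → Disjoint (ZD.ballF c) (ZD.ballF c') := by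
      intro c hc c' hc' hne
      rw [Finset.disjoint_left]
      intro v hv hv'
      exact absurd (hcode c (hCF (Finset.mem_filter.1 hc).1) c' (hCF (Finset.mem_filter.1 hc').1)
        hne v (ZD.ballF_sub_zdb hv) (ZD.ballF_sub_zdb hv')) (fun h => h)
    have hsub : CHigh.biUnion ZD.ballF ⊆ ZD.allW (m-1) := by
      intro v hv
      rcases Finset.mem_biUnion.1 hv with ⟨c, hc, hvc⟩
      rw [ZD.mem_allW, ZD.ballF_len hvc, hlenCF c (Finset.mem_filter.1 hc).1]
    calc (s+1) * CHigh.card = ∑ _c ∈ CHigh, (s+1) := by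
          rw [Finset.sum_const, smul_eq_mul, mul_comm]
      _ ≤ ∑ c ∈ CHigh, (ZD.ballF c).card := Finset.sum_le_sum (fun c hc => by
            have := (Finset.mem_filter.1 hc).2; omega)
      _ = (CHigh.biUnion ZD.ballF).card := (Finset.card_biUnion hdisj).symm
      _ ≤ (ZD.allW (m-1)).card := Finset.card_le_card hsub
      _ = 2^(m-1) := ZD.card_allW _
  -- Low bound
  have hLow : CLow.card ≤ ∑ k ∈ Finset.range (2*s+1), (m+1).choose k := by
    set T := (Finset.range (2*s+1)).biUnion
      (fun k => Finset.powersetCard k (Finset.range (m+1))) with hTdef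
    have hmap : ∀ c ∈ CLow, ZD.SF c ∈ T := by
      intro c hc
      have hlc : c.length = m := hlenCF c (Finset.mem_filter.1 hc).1
      have hcard : (ZD.SF c).card ≤ 2*s := by
        have h1 := ZD.SF_card_le c
        have h2 := (Finset.mem_filter.1 hc).2
        omega
      refine Finset.mem_biUnion.2 ⟨(ZD.SF c).card, Finset.mem_range.2 (by omega),
        Finset.mem_powersetCard.2 ⟨?_, rfl⟩⟩
      have := ZD.SF_subset c
      rw [hlc] at this
      exact this
    calc CLow.card ≤ T.card := Finset.card_le_card_of_injOn ZD.SF hmap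
          (fun a ha b hb h => ZD.SF_inj
            (by rw [hlenCF a (Finset.mem_filter.1 ha).1, hlenCF b (Finset.mem_filter.1 hb).1]) h)
      _ ≤ ∑ k ∈ Finset.range (2*s+1), (Finset.powersetCard k (Finset.range (m+1))).card :=
          Finset.card_biUnion_le
      _ = ∑ k ∈ Finset.range (2*s+1), (m+1).choose k := by
          apply Finset.sum_congr rfl
          intro k _
          rw [Finset.card_powersetCard, Finset.card_range]
  -- combine
  have h2s : 2*s ≤ m+1 := by omega
  have htail := ZD.tail_bound (m+1) (2*s) h2s
  have hkey := ZD.key s r hr2 hr9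
  rw [← hm8] at hkey
  have hkey' : (m-2) * (s+1) * 4^(m+1) * 9^s ≤ (10-r) * 2^(m-1) * 3^(m+1) := hkey
  -- T1
  have hT1 : (m-2) * (s+1) * (3^(m+1) * CLow.card) ≤ (m-2) * (s+1) * (9^s * 4^(m+1)) := by
    apply Nat.mul_le_mul_left
    have e3 : (3:ℕ)^(m+1) = 9^s * 3^(m+1-2*s) := by
      rw [show (9:ℕ) = 3^2 from rfl, ← pow_mul, ← pow_add]
      congr 1
      omega
    rw [e3, mul_assoc]
    apply Nat.mul_le_mul_left
    calc 3^(m+1-2*s) * CLow.card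
        ≤ 3^(m+1-2*s) * ∑ k ∈ Finset.range (2*s+1), (m+1).choose k :=
          Nat.mul_le_mul_left _ hLow
      _ ≤ 4^(m+1) := htail
  -- Total
  have hmain : (m-2) * CF.card ≤ 2^(m+2) := by
    have hpos : 0 < (s+1) * 3^(m+1) := by positivity
    refine Nat.le_of_mul_le_mul_left ?_ hpos
    calc (s+1) * 3^(m+1) * ((m-2) * CF.card)
        = (m-2) * (s+1) * (3^(m+1) * CLow.card) + (m-2) * (3^(m+1) * ((s+1) * CHigh.card)) := by
          rw [← hsplit]; ring
      _ ≤ (m-2) * (s+1) * (9^s * 4^(m+1)) + (m-2) * (3^(m+1) * 2^(m-1)) := by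
          exact Nat.add_le_add hT1 (Nat.mul_le_mul_left _ (Nat.mul_le_mul_left _ hH))
      _ ≤ (10-r) * 2^(m-1) * 3^(m+1) + (m-2) * (3^(m+1) * 2^(m-1)) := by
          apply Nat.add_le_add_right
          calc (m-2) * (s+1) * (9^s * 4^(m+1))
              = (m-2) * (s+1) * 4^(m+1) * 9^s := by ring
            _ ≤ (10-r) * 2^(m-1) * 3^(m+1) := hkey'
      _ = ((10-r) + (m-2)) * (2^(m-1) * 3^(m+1)) := by ring
      _ = (s+1) * 3^(m+1) * 2^(m+2) := by
          rw [show (10-r) + (m-2) = 8*(s+1) from by omega,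
            show m+2 = (m-1) + 3 from by omega, pow_add]
          ring
  -- finish over ℝ
  rw [hncard]
  have hm2 : (0:ℝ) < (m:ℝ) - 2 := by
    have : (3:ℝ) ≤ (m:ℝ) := by exact_mod_cast hm
    linarith
  rw [le_div_iff₀ hm2]
  have hcast : ((m-2:ℕ):ℝ) = (m:ℝ) - 2 := by
    have : 2 ≤ m := by omega
    push_cast [this]
    ring
  calc (CF.card : ℝ) * ((m:ℝ) - 2) = (((m-2) * CF.card : ℕ) : ℝ) := by
        push_cast [hcast]
        ring
    _ ≤ ((2^(m+2) : ℕ) : ℝ) := by exact_mod_cast hmain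
    _ = 2^(m+2) := by push_cast; ring
end

section
/- Let q ≥ 2, n ≥ 1, and let A = {α_1, …, α_k} ⊆ Σ_q × Σ_q be a length-two label set such that the labeling map L_A : Σ_q^n → {0,1,…,k}^n is injective, and let p ≥ k+1 be a prime power. Then there exists a single-substitution A-labeling code C ⊆ Σ_q^n with |C| ≥ q^n / (p·((p−1)n+1)). -/
open Polynomial

private lemma geom_aux (s : ℕ) : ∀ m : ℕ,
    (s + 1) ^ m = s * (∑ t ∈ Finset.range m, (s + 1) ^ t) + 1 := by
  intro m
  induction m with
  | zero => simp
  | succ m ih =>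
    rw [Finset.sum_range_succ, pow_succ]
    nlinarith [ih]

/-- The `A`-labeling sequence of `x`, where the length-two label set
`A = {α₁ < ⋯ < α_k}` is given by the tuple `α` (1-indexed labels; `0` means
"no label starts here", and the last coordinate is always `0`). -/
noncomputable def labelFun {q k n : ℕ} (α : Fin k → Fin q × Fin q)
    (x : Fin n → Fin q) : Fin n → Fin (k + 1) := fun i =>
  if h : (i : ℕ) + 1 < n then
    if h2 : ∃ j, α j = (x i, x ⟨(i : ℕ) + 1, h⟩) then (h2.choose).succ else 0
  else 0

/-- If the labeling map `L_A : Σ_q^n → {0,…,k}^n` of a length-two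
label set `A = {α₁ < ⋯ < α_k}` is injective and `p ≥ k+1` is a prime power, then
there exists a single-substitution `A`-labeling code `C ⊆ Σ_q^n` (the radius-one
Hamming balls around the labelings of distinct codewords are disjoint) with
`|C| ≥ q^n / (p·((p−1)n+1))`. -/
theorem stmt5 (q n k p : ℕ) (hq : 2 ≤ q) (hn : 1 ≤ n)
    (α : Fin k → Fin q × Fin q) (hlex : StrictMono fun j => toLex (α j))
    (hLinj : Function.Injective (labelFun (n := n) α))
    (hp : k + 1 ≤ p) (hpp : IsPrimePow p) :
    ∃ C : Set (Fin n → Fin q),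
      (q : ℝ) ^ n / ((p : ℝ) * (((p : ℝ) - 1) * (n : ℝ) + 1)) ≤ (C.ncard : ℝ) ∧
      ∀ x ∈ C, ∀ x' ∈ C, x ≠ x' →
        ∀ v : Fin n → Fin (k + 1),
          hammingDist v (labelFun α x) ≤ 1 → hammingDist v (labelFun α x') ≤ 1 → False := by
  classical
  obtain ⟨r, e, hrp, he, rfl⟩ := hpp
  haveI hrfact : Fact (Nat.Prime r) := ⟨Nat.prime_iff.mpr hrp⟩
  have hr2 : 2 ≤ r := hrfact.out.two_le
  have hP2 : 2 ≤ r ^ e := by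
    calc 2 ≤ r := hr2
    _ = r ^ 1 := (pow_one r).symm
    _ ≤ r ^ e := Nat.pow_le_pow_right (by omega) he
  obtain ⟨s, hs⟩ : ∃ s, r ^ e = s + 1 := ⟨r ^ e - 1, by omega⟩
  have hs1 : 1 ≤ s := by omega
  -- choose the minimal m with (p-1)*n + 1 ≤ p^m
  have hex : ∃ m, s * n + 1 ≤ (r ^ e) ^ m :=
    ⟨s * n + 1, (Nat.lt_pow_self (by omega)).le⟩
  set m := Nat.find hex with hmdef
  have hm : s * n + 1 ≤ (r ^ e) ^ m := Nat.find_spec hex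
  have hm1 : 1 ≤ m := by
    rcases Nat.eq_zero_or_pos m with h0 | h; swap; · exact h
    exfalso; rw [h0, pow_zero] at hm; nlinarith
  have hmle : (r ^ e) ^ m ≤ (r ^ e) * (s * n + 1) := by
    have hlt : ¬ s * n + 1 ≤ (r ^ e) ^ (m - 1) := Nat.find_min hex (by omega)
    calc (r ^ e) ^ m = (r ^ e) * (r ^ e) ^ (m - 1) := by
          rw [← pow_succ']; congr 1; omega
    _ ≤ (r ^ e) * (s * n + 1) := Nat.mul_le_mul_left _ (by omega)
  -- geometric sum
  set N := ∑ t ∈ Finset.range m, (r ^ e) ^ t with hNdef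
  have hgeom : (r ^ e) ^ m = s * N + 1 := by
    rw [hNdef, hs]; exact geom_aux s m
  have hnN : n ≤ N := by
    have : s * n ≤ s * N := by omega
    exact Nat.le_of_mul_le_mul_left this (by omega)
  -- the big field K
  set K := GaloisField r (e * m) with hKdef
  haveI : Fintype K := Fintype.ofFinite K
  have hem : e * m ≠ 0 := by positivity
  have hcardK : Fintype.card K = (r ^ e) ^ m := by
    rw [← Nat.card_eq_fintype_card, hKdef, GaloisField.card r (e * m) hem, ← pow_mul]
  -- the small field F = GF(r^e) embeds into K
  haveI : Fintype (GaloisField r e) := Fintype.ofFinite _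
  have hcardF : Fintype.card (GaloisField r e) = r ^ e := by
    rw [← Nat.card_eq_fintype_card, GaloisField.card r e he.ne']
  have hdvd : (X ^ r ^ e - X : (ZMod r)[X]) ∣ (X ^ r ^ (e * m) - X) := by
    have h1 : (X ^ (r ^ e - 1) - 1 : (ZMod r)[X]) ∣ (X ^ ((r ^ e) ^ m - 1) - 1) := by
      have h2 : (r ^ e - 1) * N = (r ^ e) ^ m - 1 := by
        have : r ^ e - 1 = s := by omega
        rw [this]; omega
      have := sub_dvd_pow_sub_pow (X ^ (r ^ e - 1) : (ZMod r)[X]) 1 N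
      rwa [one_pow, ← pow_mul, h2] at this
    have e1 : (X ^ r ^ e - X : (ZMod r)[X]) = X * (X ^ (r ^ e - 1) - 1) := by
      rw [mul_sub, mul_one, ← pow_succ']; congr 2; omega
    have e2 : (X ^ r ^ (e * m) - X : (ZMod r)[X]) = X * (X ^ ((r ^ e) ^ m - 1) - 1) := by
      have hpm : r ^ (e * m) = (r ^ e) ^ m := by rw [pow_mul]
      rw [hpm, mul_sub, mul_one, ← pow_succ']
      congr 2
      have h1m : 1 ≤ (r ^ e) ^ m := Nat.one_le_pow _ _ (by omega)
      omega
    rw [e1, e2]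
    exact mul_dvd_mul_left _ h1
  haveI : IsSplittingField (ZMod r) K (X ^ r ^ (e * m) - X) :=
    instIsSplittingFieldZModGaloisFieldHSubPolynomialHPowNatX r (e * m)
  haveI : IsSplittingField (ZMod r) (GaloisField r e) (X ^ r ^ e - X) :=
    instIsSplittingFieldZModGaloisFieldHSubPolynomialHPowNatX r e
  have hsplits : Splits ((X ^ r ^ e - X : (ZMod r)[X]).map (algebraMap (ZMod r) K)) := by
    refine Polynomial.Splits.of_dvd ?_
      (Polynomial.map_ne_zero (FiniteField.X_pow_card_pow_sub_X_ne_zero _ hem (by omega)))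
      (Polynomial.map_dvd _ hdvd)
    exact IsSplittingField.splits K (X ^ r ^ (e * m) - X)
  let ι : GaloisField r e →+* K :=
    (IsSplittingField.lift (GaloisField r e) (X ^ r ^ e - X : (ZMod r)[X]) hsplits).toRingHom
  have hιinj : Function.Injective ι := ι.injective
  -- embedding of labels into the small field
  obtain ⟨φ₀⟩ : Nonempty (Fin (k + 1) ↪ GaloisField r e) := by
    apply Function.Embedding.nonempty_of_card_le
    rw [hcardF, Fintype.card_fin]; exact hp
  -- generator of Kˣ
  obtain ⟨g, hg⟩ := IsCyclic.exists_generator (α := Kˣ)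
  have hordg : orderOf g = s * N := by
    rw [orderOf_eq_card_of_forall_mem_zpowers hg, Nat.card_units,
      Nat.card_eq_fintype_card, hcardK]
    omega
  -- the syndrome map
  set σ : (Fin n → Fin (k + 1)) → K :=
    fun v => ∑ i : Fin n, ι (φ₀ (v i)) * (g : K) ^ (i : ℕ) with hσdef
  -- key pairwise lemma
  have pairlemma : ∀ (i j : ℕ), i < j → j < n → ∀ c c' : GaloisField r e, c ≠ 0 → c' ≠ 0 →
      ι c * (g : K) ^ i + ι c' * (g : K) ^ j = 0 → False := by
    intro i j hij hjn c c' hc hc' heq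
    have hgi : ((g : K) ^ i) ≠ 0 := pow_ne_zero _ (Units.ne_zero g)
    have hci : (ι c') ≠ 0 := fun h => hc' (hιinj (by rwa [map_zero]))
    have h2 : ι c + ι c' * (g : K) ^ (j - i) = 0 := by
      have hfac : (g : K) ^ i * (ι c + ι c' * (g : K) ^ (j - i)) = 0 := by
        have hpw : (g : K) ^ j = (g : K) ^ i * (g : K) ^ (j - i) := by
          rw [← pow_add]; congr 1; omega
        rw [hpw] at heq; linear_combination heq
      exact (mul_eq_zero.mp hfac).resolve_left hgi
    have hw : (g : K) ^ (j - i) = ι (-c / c') := by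
      rw [map_div₀, map_neg, eq_div_iff hci]
      linear_combination h2
    have hwne : (-c / c') ≠ 0 := by
      simp only [ne_eq, _root_.div_eq_zero_iff, neg_eq_zero]
      tauto
    have hone : (-c / c') ^ (r ^ e - 1) = 1 := by
      have := FiniteField.pow_card_sub_one_eq_one (-c / c') hwne
      rwa [hcardF] at this
    have hval : ((g : K) ^ (j - i)) ^ (r ^ e - 1) = 1 := by
      rw [hw, ← map_pow, hone, map_one]
    have hpowu : g ^ ((j - i) * (r ^ e - 1)) = 1 := by
      ext
      push_cast [pow_mul]
      simpa using hval
    have hdvd2 : s * N ∣ (j - i) * s := by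
      have := orderOf_dvd_of_pow_eq_one hpowu
      rw [hordg] at this
      have hse : r ^ e - 1 = s := by omega
      rwa [hse] at this
    have hNd : N ∣ (j - i) := by
      have : s * N ∣ s * (j - i) := by rwa [mul_comm (j - i) s] at hdvd2
      exact (mul_dvd_mul_iff_left (by omega : s ≠ 0)).mp this
    have : N ≤ j - i := Nat.le_of_dvd (by omega) hNd
    omega
  -- distance-3 property of σ-fibers
  have key : ∀ u v : Fin n → Fin (k + 1), σ u = σ v → hammingDist u v ≤ 2 → u = v := by
    intro u v hσuv hd
    by_contra hne
    set D := Finset.univ.filter (fun i => u i ≠ v i) with hDdef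
    have hsumD : ∑ i ∈ D, (ι (φ₀ (u i)) - ι (φ₀ (v i))) * (g : K) ^ (i : ℕ) = 0 := by
      have hall : ∑ i : Fin n, (ι (φ₀ (u i)) - ι (φ₀ (v i))) * (g : K) ^ (i : ℕ) = 0 := by
        simp only [sub_mul, Finset.sum_sub_distrib]
        exact sub_eq_zero_of_eq hσuv
      rw [← hall]
      apply Finset.sum_subset (Finset.subset_univ _)
      intro i _ hiD
      have : u i = v i := by
        by_contra hcon
        exact hiD (Finset.mem_filter.mpr ⟨Finset.mem_univ _, hcon⟩)
      rw [this, sub_self, zero_mul]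
    have hDcard2 : D.card ≤ 2 := hd
    have hDne : D.Nonempty := by
      obtain ⟨i, hi⟩ := Function.ne_iff.mp hne
      exact ⟨i, Finset.mem_filter.mpr ⟨Finset.mem_univ _, hi⟩⟩
    have hDpos : 1 ≤ D.card := Finset.card_pos.mpr hDne
    have hterm : ∀ i ∈ D, ι (φ₀ (u i)) - ι (φ₀ (v i)) = ι (φ₀ (u i) - φ₀ (v i)) ∧
        (φ₀ (u i) - φ₀ (v i)) ≠ 0 := by
      intro i hi
      have hne' : u i ≠ v i := (Finset.mem_filter.mp hi).2
      refine ⟨(map_sub ι _ _).symm, ?_⟩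
      exact sub_ne_zero_of_ne (fun h => hne' (φ₀.injective h))
    interval_cases hDc : D.card
    · -- card 1
      obtain ⟨a, ha⟩ := Finset.card_eq_one.mp hDc
      have haD : a ∈ D := ha ▸ Finset.mem_singleton_self a
      rw [ha, Finset.sum_singleton] at hsumD
      obtain ⟨heq, hne0⟩ := hterm a haD
      rw [heq] at hsumD
      rcases mul_eq_zero.mp hsumD with h | h
      · exact hne0 (hιinj (by rwa [map_zero]))
      · exact pow_ne_zero _ (Units.ne_zero g) h
    · -- card 2
      obtain ⟨a, b, hab, hD⟩ := Finset.card_eq_two.mp hDc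
      have haD : a ∈ D := hD ▸ Finset.mem_insert_self a {b}
      have hbD : b ∈ D := hD ▸ Finset.mem_insert_of_mem (Finset.mem_singleton_self b)
      rw [hD, Finset.sum_pair hab] at hsumD
      obtain ⟨heqa, hnea⟩ := hterm a haD
      obtain ⟨heqb, hneb⟩ := hterm b hbD
      rw [heqa, heqb] at hsumD
      have hvne : (a : ℕ) ≠ (b : ℕ) := fun h => hab (Fin.val_injective h)
      rcases lt_or_gt_of_ne hvne with hlt | hlt
      · exact pairlemma _ _ hlt b.isLt _ _ hnea hneb hsumD
      · exact pairlemma _ _ hlt a.isLt _ _ hneb hnea (by linear_combination hsumD)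
  -- pigeonhole
  set f : (Fin n → Fin q) → K := fun x => σ (labelFun α x) with hfdef
  obtain ⟨y₀, -, hy₀⟩ := Finset.exists_max_image Finset.univ
    (fun y : K => (Finset.univ.filter fun x => f x = y).card) ⟨0, Finset.mem_univ 0⟩
  set Cfin := Finset.univ.filter (fun x => f x = y₀) with hCdef
  have hcount : q ^ n = ∑ y : K, (Finset.univ.filter fun x => f x = y).card := by
    rw [← Finset.card_eq_sum_card_fiberwise (fun x _ => Finset.mem_univ (f x)),
      Finset.card_univ, Fintype.card_fun]
    simp
  have hbound : q ^ n ≤ Fintype.card K * Cfin.card := by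
    rw [hcount, ← Finset.card_univ (α := K)]
    have := Finset.sum_le_card_nsmul Finset.univ
      (fun y : K => (Finset.univ.filter fun x => f x = y).card) Cfin.card
      (fun y _ => hy₀ y (Finset.mem_univ y))
    simpa [smul_eq_mul] using this
  have hboundN : q ^ n ≤ (r ^ e * (s * n + 1)) * Cfin.card := by
    calc q ^ n ≤ Fintype.card K * Cfin.card := hbound
    _ ≤ (r ^ e * (s * n + 1)) * Cfin.card := by
        apply Nat.mul_le_mul_right
        rw [hcardK]; exact hmle
  refine ⟨(Cfin : Set (Fin n → Fin q)), ?_, ?_⟩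
  · rw [Set.ncard_coe_finset]
    have hcast : ((r ^ e : ℕ) : ℝ) = (s : ℝ) + 1 := by exact_mod_cast hs
    have hden : ((r ^ e : ℕ) : ℝ) * ((((r ^ e : ℕ) : ℝ) - 1) * (n : ℝ) + 1)
        = ((r ^ e * (s * n + 1) : ℕ) : ℝ) := by
      have hcast' : (r : ℝ) ^ e = (s : ℝ) + 1 := by exact_mod_cast hs
      push_cast
      rw [hcast']
      ring
    have hpos : (0 : ℝ) < ((r ^ e * (s * n + 1) : ℕ) : ℝ) := by
      have h0 : 0 < r ^ e * (s * n + 1) := Nat.mul_pos (by omega) (by omega)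
      exact_mod_cast h0
    rw [hden, div_le_iff₀ hpos]
    calc ((q : ℝ)) ^ n = ((q ^ n : ℕ) : ℝ) := by push_cast; ring
    _ ≤ (((r ^ e * (s * n + 1)) * Cfin.card : ℕ) : ℝ) := by exact_mod_cast hboundN
    _ = (Cfin.card : ℝ) * ((r ^ e * (s * n + 1) : ℕ) : ℝ) := by push_cast; ring
  · intro x hx x' hx' hxx' v hv1 hv2
    have hfx : f x = y₀ := (Finset.mem_filter.mp (Finset.mem_coe.mp hx)).2
    have hfx' : f x' = y₀ := (Finset.mem_filter.mp (Finset.mem_coe.mp hx')).2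
    have hσeq : σ (labelFun α x) = σ (labelFun α x') := hfx.trans hfx'.symm
    have htri : hammingDist (labelFun α x) (labelFun α x') ≤ 2 := by
      calc hammingDist (labelFun α x) (labelFun α x')
          ≤ hammingDist (labelFun α x) v + hammingDist v (labelFun α x') :=
            hammingDist_triangle _ _ _
      _ ≤ 1 + 1 := by
          rw [hammingDist_comm]
          exact Nat.add_le_add hv1 hv2
      _ = 2 := rfl
    exact hxx' (hLinj (key _ _ hσeq htri))
end

section
/- Let S = {(0,1),(1,0),(2,0),(2,1),(2,2),(2,3),(3,0),(3,1),(3,2),(3,3)} ⊆ Σ_4 × Σ_4 (the label set {AC, CA, GA, GC, GG, GT, TA, TC, TG, TT} under A,C,G,T ↦ 0,1,2,3). For every integer k ≥ 2 there exist an integer n with 2(n−k) ≤ ⌈log_2 k⌉ + 8 and a code C ⊆ Σ_4^n with |C| = 4^k that is a single-deletion S-labeling code. -/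
/-- The label set `{AC, CA, GA, GC, GG, GT, TA, TC, TG, TT}` over `Σ₄`,
under `A,C,G,T ↦ 0,1,2,3`, listed in lexicographic order. -/
def S10 : Fin 10 → Fin 4 × Fin 4 :=
  ![(0,1),(1,0),(2,0),(2,1),(2,2),(2,3),(3,0),(3,1),(3,2),(3,3)]


namespace Stmt6Aux

/-- ones count -/
def ones : List Bool → ℕ
  | [] => 0
  | c :: l => (cond c 1 0) + ones l

/-- VT weighted sum: Σ (t+1)·l[t] -/
def vts : List Bool → ℕ
  | [] => 0
  | c :: l => (cond c 1 0) + (vts l + ones l)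

@[simp] theorem ones_nil : ones [] = 0 := rfl
@[simp] theorem ones_cons (c : Bool) (l : List Bool) : ones (c :: l) = (cond c 1 0) + ones l := rfl
@[simp] theorem vts_nil : vts [] = 0 := rfl
@[simp] theorem vts_cons (c : Bool) (l : List Bool) :
    vts (c :: l) = (cond c 1 0) + (vts l + ones l) := rfl

theorem ones_le_length : ∀ l : List Bool, ones l ≤ l.length
  | [] => le_refl _
  | c :: l => by
      have := ones_le_length l
      cases c <;> simp [ones_cons] <;> omega

theorem ones_append (l₁ l₂ : List Bool) : ones (l₁ ++ l₂) = ones l₁ + ones l₂ := by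
  induction l₁ with
  | nil => simp
  | cons c l ih => simp [ih]; ring

theorem ones_eq_zero {l : List Bool} (h : ones l = 0) : ∀ x ∈ l, x = false := by
  induction l with
  | nil => simp
  | cons c l ih =>
    cases c
    · simp only [ones_cons, cond] at h
      simpa using ih (by omega)
    · simp at h

theorem ones_eq_length {l : List Bool} (h : ones l = l.length) : ∀ x ∈ l, x = true := by
  induction l with
  | nil => simp
  | cons c l ih =>
    cases c
    · exfalso
      simp only [ones_cons, cond, List.length_cons, Nat.zero_add] at h
      have := ones_le_length l; omega
    · simp only [ones_cons, cond, List.length_cons] at h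
      simpa using ih (by omega)

theorem ones_insertIdx : ∀ (p : ℕ) (l : List Bool) (c : Bool), p ≤ l.length →
    ones (l.insertIdx p c) = (cond c 1 0) + ones l
  | 0, l, c, _ => by simp
  | (p+1), [], c, h => by simp at h
  | (p+1), a :: l, c, h => by
      rw [List.insertIdx_succ_cons, ones_cons, ones_insertIdx p l c (by simpa using h),
        ones_cons]
      ring

theorem vts_insertIdx : ∀ (p : ℕ) (l : List Bool) (c : Bool), p ≤ l.length →
    vts (l.insertIdx p c) = vts l + (p+1) * (cond c 1 0) + ones (l.drop p)
  | 0, l, c, _ => by simp; ring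
  | (p+1), [], c, h => by simp at h
  | (p+1), a :: l, c, h => by
      rw [List.insertIdx_succ_cons, vts_cons, vts_insertIdx p l c (by simpa using h),
        ones_insertIdx p l c (by simpa using h), List.drop_succ_cons, vts_cons]
      ring

end Stmt6Aux

namespace Stmt6Aux
variable {α : Type*}

/-- Inserting the same element at `p` or at `p'` gives the same list when everything
in between equals that element. -/
theorem insertIdx_eq_of_window (d : α) : ∀ (l : List α) (c : α) (p p' : ℕ), p ≤ p' →
    p' ≤ l.length → (∀ t, p ≤ t → t < p' → l.getD t d = c) →
    l.insertIdx p c = l.insertIdx p' c := by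
  intro l
  induction l with
  | nil =>
    intro c p p' h1 h2 _
    simp only [List.length_nil, Nat.le_zero] at h2
    subst h2
    simp only [Nat.le_zero] at h1
    subst h1
    rfl
  | cons a l ih =>
    intro c p p' h1 h2 hw
    match p, p' with
    | 0, 0 => rfl
    | 0, (q+1) =>
      have ha : a = c := hw 0 (le_refl _) (by omega)
      have : l.insertIdx 0 c = l.insertIdx q c := by
        apply ih c 0 q (by omega) (by simpa using h2)
        intro t _ ht
        have := hw (t+1) (by omega) (by omega)
        simpa using this
      rw [List.insertIdx_succ_cons, ← this]
      simp [ha]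
    | (r+1), (q+1) =>
      rw [List.insertIdx_succ_cons, List.insertIdx_succ_cons]
      congr 1
      apply ih c r q (by omega) (by simpa using h2)
      intro t ht ht'
      have := hw (t+1) (by omega) (by omega)
      simpa using this

theorem insertIdx_eraseIdx : ∀ (l : List α) (i : ℕ) (h : i < l.length),
    (l.eraseIdx i).insertIdx i (l.get ⟨i, h⟩) = l
  | [], i, h => by simp at h
  | a :: l, 0, h => by simp
  | a :: l, (i+1), h => by
      rw [List.eraseIdx_cons_succ, List.insertIdx_succ_cons]
      congr 1
      exact insertIdx_eraseIdx l i (by simpa using h)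

/-- getD of insertIdx, below the insertion point. -/
theorem getD_insertIdx_lt (d : α) : ∀ (p : ℕ) (l : List α) (c : α) (t : ℕ), t < p →
    (l.insertIdx p c).getD t d = l.getD t d
  | 0, _, _, _, ht => by omega
  | (p+1), [], c, t, ht => by simp
  | (p+1), a :: l, c, 0, ht => by simp
  | (p+1), a :: l, c, (t+1), ht => by
      rw [List.insertIdx_succ_cons]
      simp only [List.getD_cons_succ]
      exact getD_insertIdx_lt d p l c t (by omega)

theorem getD_insertIdx_self (d : α) : ∀ (p : ℕ) (l : List α) (c : α), p ≤ l.length →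
    (l.insertIdx p c).getD p d = c
  | 0, _, _, _ => by simp
  | (p+1), [], c, h => by simp at h
  | (p+1), a :: l, c, h => by
      rw [List.insertIdx_succ_cons]
      simp only [List.getD_cons_succ]
      exact getD_insertIdx_self d p l c (by simpa using h)

theorem getD_insertIdx_gt (d : α) : ∀ (p : ℕ) (l : List α) (c : α) (t : ℕ), p ≤ t →
    (l.insertIdx p c).getD (t+1) d = l.getD t d
  | 0, l, c, t, ht => by simp
  | (p+1), [], c, t, ht => by simp
  | (p+1), a :: l, c, 0, ht => by omega
  | (p+1), a :: l, c, (t+1), ht => by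
      rw [List.insertIdx_succ_cons]
      simp only [List.getD_cons_succ]
      exact getD_insertIdx_gt d p l c t (by omega)

end Stmt6Aux

namespace Stmt6Aux

open Stmt6Aux

/-- value at a window position is a member of the window sublist -/
theorem getD_mem_window (d : Bool) (cm : List Bool) (p p' t : ℕ) (hpt : p ≤ t) (htp : t < p')
    (hp' : p' ≤ cm.length) : cm.getD t d ∈ (cm.drop p).take (p' - p) := by
  have ht : t < cm.length := by omega
  have h1 : t - p < p' - p := by omega
  have h2 : t - p < (cm.drop p).length := by simp; omega
  have h3 : t - p < ((cm.drop p).take (p' - p)).length := by simp; omega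
  have : ((cm.drop p).take (p' - p))[t - p]'h3 = cm.getD t d := by
    rw [List.getElem_take, List.getElem_drop, List.getD_eq_getElem (l := cm) (d := d) (hn := ht)]
    congr 1
    omega
  rw [← this]
  exact List.getElem_mem h3

/-- main VT argument, `p ≤ p'` case -/
theorem vt_main (cm : List Bool) (c c' : Bool) (p p' : ℕ) (hpp : p ≤ p') (hp' : p' ≤ cm.length)
    (hmod : vts (cm.insertIdx p c) % (cm.length + 2) = vts (cm.insertIdx p' c') % (cm.length + 2)) :
    cm.insertIdx p c = cm.insertIdx p' c' := by
  set M := cm.length + 2 with hM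
  set R := ones ((cm.drop p).take (p' - p)) with hR
  have hwin_len : ((cm.drop p).take (p' - p)).length ≤ p' - p := by
    simp
  have hRle : R ≤ p' - p := le_trans (ones_le_length _) hwin_len
  have hdrop : ones (cm.drop p) = R + ones (cm.drop p') := by
    have : cm.drop p = (cm.drop p).take (p' - p) ++ cm.drop p' := by
      conv_lhs => rw [← List.take_append_drop (p' - p) (cm.drop p)]
      rw [List.drop_drop]
      congr 2
      omega
    rw [this, ones_append, ← hR]
  rw [vts_insertIdx p cm c (by omega), vts_insertIdx p' cm c' hp', hdrop] at hmod
  -- cancel common terms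
  have key : ((p+1) * (cond c 1 0) + R) % M = ((p'+1) * (cond c' 1 0)) % M := by
    have h1 : vts cm + (p + 1) * (cond c 1 0) + (R + ones (cm.drop p')) =
        ((p+1) * (cond c 1 0) + R) + (vts cm + ones (cm.drop p')) := by ring
    have h2 : vts cm + (p' + 1) * (cond c' 1 0) + ones (cm.drop p') =
        ((p'+1) * (cond c' 1 0)) + (vts cm + ones (cm.drop p')) := by ring
    rw [h1, h2] at hmod
    exact Nat.ModEq.add_right_cancel' _ hmod
  have hwindow_all : ∀ b : Bool, (∀ x ∈ (cm.drop p).take (p' - p), x = b) →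
      cm.insertIdx p b = cm.insertIdx p' b := by
    intro b hall
    apply insertIdx_eq_of_window b cm b p p' hpp hp'
    intro t hpt htp
    exact hall _ (getD_mem_window b cm p p' t hpt htp hp')
  cases c <;> cases c'
  · -- false false
    simp only [cond] at key
    have hRM : R = 0 := by
      rw [Nat.mul_zero, Nat.zero_add, Nat.mul_zero, Nat.zero_mod, Nat.mod_eq_of_lt (by omega)] at key
      exact key
    have := ones_eq_zero (l := (cm.drop p).take (p' - p)) (by rw [← hR]; exact hRM)
    exact hwindow_all false this
  · -- false true : contradiction
    exfalso
    simp only [cond] at key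
    rw [Nat.mul_zero, Nat.zero_add, Nat.mul_one, Nat.mod_eq_of_lt (by omega),
      Nat.mod_eq_of_lt (by omega)] at key
    omega
  · -- true false : contradiction
    exfalso
    simp only [cond] at key
    rw [Nat.mul_one, Nat.mul_zero, Nat.zero_mod, Nat.mod_eq_of_lt (by omega)] at key
    omega
  · -- true true
    simp only [cond] at key
    rw [Nat.mul_one, Nat.mul_one, Nat.mod_eq_of_lt (by omega), Nat.mod_eq_of_lt (by omega)] at key
    have hRval : R = p' - p := by omega
    have hlen_eq : ((cm.drop p).take (p' - p)).length = R := by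
      have h2 : ((cm.drop p).take (p' - p)).length ≥ R := ones_le_length _
      omega
    have := ones_eq_length (l := (cm.drop p).take (p' - p)) (by rw [← hR, hlen_eq])
    exact hwindow_all true this

/-- Binary VT code: same syndrome mod (length+1) and a common single-deletion
subsequence forces equality. -/
theorem vt_core (s s' : List Bool) (hlen : s.length = s'.length)
    (hmod : vts s % (s.length + 1) = vts s' % (s.length + 1))
    (p p' : ℕ) (he : s.eraseIdx p = s'.eraseIdx p') : s = s' := by
  rcases Nat.lt_or_ge p s.length with hp | hp
  · rcases Nat.lt_or_ge p' s'.length with hp' | hp'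
    · -- main case
      have hclen : (s.eraseIdx p).length + 1 = s.length := List.length_eraseIdx_add_one hp
      have hs : (s.eraseIdx p).insertIdx p (s.get ⟨p, hp⟩) = s := insertIdx_eraseIdx s p hp
      have hs' : (s.eraseIdx p).insertIdx p' (s'.get ⟨p', hp'⟩) = s' := by
        rw [he]; exact insertIdx_eraseIdx s' p' hp'
      rw [← hs, ← hs']
      have hmod2 : vts ((s.eraseIdx p).insertIdx p (s.get ⟨p, hp⟩)) % ((s.eraseIdx p).length + 2)
          = vts ((s.eraseIdx p).insertIdx p' (s'.get ⟨p', hp'⟩)) % ((s.eraseIdx p).length + 2) := by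
        rw [hs, hs']
        have h2 : (s.eraseIdx p).length + 2 = s.length + 1 := by omega
        rw [h2, hmod]
      have hp'2 : p' ≤ (s.eraseIdx p).length := by omega
      have hp2 : p ≤ (s.eraseIdx p).length := by omega
      rcases le_total p p' with h | h
      · exact vt_main _ _ _ p p' h hp'2 hmod2
      · exact (vt_main _ _ _ p' p h hp2 hmod2.symm).symm
    · exfalso
      rw [List.eraseIdx_of_length_le hp'] at he
      have h1 := List.length_eraseIdx_add_one hp
      rw [he] at h1
      omega
  · rw [List.eraseIdx_of_length_le hp] at he
    rcases Nat.lt_or_ge p' s'.length with hp' | hp'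
    · exfalso
      have h1 := List.length_eraseIdx_add_one hp'
      rw [← he] at h1
      omega
    · rwa [List.eraseIdx_of_length_le hp'] at he

end Stmt6Aux

namespace Stmt6Aux

/-- signature sequence -/
def sg : List (Fin 11) → List Bool
  | [] => []
  | [_] => []
  | a :: b :: l => decide (a ≤ b) :: sg (b :: l)

@[simp] theorem sg_nil : sg [] = [] := rfl
@[simp] theorem sg_single (a : Fin 11) : sg [a] = [] := rfl
@[simp] theorem sg_cons2 (a b : Fin 11) (l : List (Fin 11)) :
    sg (a :: b :: l) = decide (a ≤ b) :: sg (b :: l) := rfl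

theorem sg_length : ∀ l : List (Fin 11), (sg l).length = l.length - 1
  | [] => rfl
  | [_] => rfl
  | a :: b :: l => by
      rw [sg_cons2, List.length_cons]
      rw [sg_length (b :: l)]
      simp

theorem sg_getD : ∀ (l : List (Fin 11)) (t : ℕ), t + 1 < l.length →
    (sg l).getD t false = decide (l.getD t 0 ≤ l.getD (t+1) 0)
  | [], t, h => by simp at h
  | [_], t, h => by simp at h
  | a :: b :: l, 0, h => by simp
  | a :: b :: l, (t+1), h => by
      rw [sg_cons2]
      simp only [List.getD_cons_succ]
      exact sg_getD (b :: l) t (by simpa using h)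

theorem sg_eraseIdx : ∀ (l : List (Fin 11)) (i : ℕ), ∃ p, sg (l.eraseIdx i) = (sg l).eraseIdx p
  | [], i => ⟨0, by simp⟩
  | [a], i => by
      cases i <;> exact ⟨0, by simp⟩
  | a :: b :: l, 0 => ⟨0, by simp⟩
  | a :: b :: l, 1 => by
      match l with
      | [] => exact ⟨0, by simp⟩
      | d :: l3 =>
        by_cases had : a ≤ d
        · by_cases hab : a ≤ b
          · refine ⟨1, ?_⟩
            simp only [List.eraseIdx_cons_succ, List.eraseIdx_cons_zero, sg_cons2,
              List.eraseIdx_cons_succ, List.eraseIdx_cons_zero]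
            congr 1
            simp [had, hab]
          · refine ⟨0, ?_⟩
            have hbd : b ≤ d := le_trans (le_of_not_ge hab) had
            simp only [List.eraseIdx_cons_succ, List.eraseIdx_cons_zero, sg_cons2,
              List.eraseIdx_cons_zero]
            congr 1
            simp [had, hbd]
        · by_cases hbd : b ≤ d
          · refine ⟨1, ?_⟩
            have hab : ¬ a ≤ b := fun h => had (le_trans h hbd)
            simp only [List.eraseIdx_cons_succ, List.eraseIdx_cons_zero, sg_cons2,
              List.eraseIdx_cons_succ, List.eraseIdx_cons_zero]
            congr 1
            simp [had, hab]
          · refine ⟨0, ?_⟩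
            simp only [List.eraseIdx_cons_succ, List.eraseIdx_cons_zero, sg_cons2,
              List.eraseIdx_cons_zero]
            congr 1
            simp [had, hbd]
  | a :: b :: l, (i+2) => by
      obtain ⟨p', hp'⟩ := sg_eraseIdx (b :: l) (i+1)
      refine ⟨p' + 1, ?_⟩
      have h1 : (a :: b :: l).eraseIdx (i+2) = a :: ((b :: l).eraseIdx (i+1)) :=
        List.eraseIdx_cons_succ ..
      have h2 : (b :: l).eraseIdx (i+1) = b :: (l.eraseIdx i) := List.eraseIdx_cons_succ ..
      rw [h1, h2, sg_cons2, ← h2, hp', sg_cons2, List.eraseIdx_cons_succ]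

/-- same-symbol insertions with equal signatures coincide -/
theorem sg_insert_same (v : List (Fin 11)) (a : Fin 11) (i j : ℕ) (hij : i < j)
    (hj : j ≤ v.length) (hs : sg (v.insertIdx i a) = sg (v.insertIdx j a)) :
    v.insertIdx i a = v.insertIdx j a := by
  have hi : i ≤ v.length := by omega
  have hlu : (v.insertIdx i a).length = v.length + 1 := by rw [List.length_insertIdx, if_pos hi]
  have hlu' : (v.insertIdx j a).length = v.length + 1 := by rw [List.length_insertIdx, if_pos hj]
  set w : ℕ → Fin 11 := fun t => if t < j then v.getD t 0 else a with hw
  have E : ∀ t, t + 1 < v.length + 1 →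
      decide ((v.insertIdx i a).getD t 0 ≤ (v.insertIdx i a).getD (t+1) 0) =
      decide ((v.insertIdx j a).getD t 0 ≤ (v.insertIdx j a).getD (t+1) 0) := by
    intro t ht
    rw [← sg_getD _ t (by omega), ← sg_getD _ t (by omega), hs]
  have Fu' : ∀ t, t ≤ j → (v.insertIdx j a).getD t 0 = w t := by
    intro t ht
    rcases Nat.lt_or_ge t j with h | h
    · rw [getD_insertIdx_lt 0 j v a t h, hw]
      simp [h]
    · have : t = j := by omega
      subst this
      rw [getD_insertIdx_self 0 t v a (by omega), hw]
      simp
  have Fu0 : (v.insertIdx i a).getD i 0 = a := getD_insertIdx_self 0 i v a hi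
  have Fu1 : ∀ t, i ≤ t → t < j → (v.insertIdx i a).getD (t+1) 0 = w t := by
    intro t ht htj
    rw [getD_insertIdx_gt 0 i v a t ht, hw]
    simp [htj]
  -- the chain equations
  have Ei : decide (a ≤ w i) = decide (w i ≤ w (i+1)) := by
    have := E i (by omega)
    rw [Fu0, Fu1 i (le_refl _) hij, Fu' i (by omega), Fu' (i+1) (by omega)] at this
    exact this
  have Et : ∀ t, i < t → t < j → decide (w (t-1) ≤ w t) = decide (w t ≤ w (t+1)) := by
    intro t ht htj
    have := E t (by omega)
    have h1 : (v.insertIdx i a).getD t 0 = w (t-1) := by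
      have h0 := Fu1 (t-1) (by omega) (by omega)
      have ht' : t - 1 + 1 = t := by omega
      rw [ht'] at h0
      exact h0
    have h2 : (v.insertIdx i a).getD (t+1) 0 = w t := Fu1 t (by omega) htj
    rw [h1, h2, Fu' t (by omega), Fu' (t+1) (by omega)] at this
    exact this
  have Claim1 : ∀ t, i ≤ t → t < j → decide (w t ≤ w (t+1)) = decide (a ≤ w i) := by
    intro t ht
    induction t, ht using Nat.le_induction with
    | base => intro h; exact Ei.symm
    | succ t ht ih =>
      intro h
      have h1 := Et (t+1) (by omega) h
      have h2 := ih (by omega)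
      rw [← h1]
      have : t + 1 - 1 = t := by omega
      rw [this]
      exact h2
  have window : ∀ t, i ≤ t → t < j → v.getD t 0 = a := by
    by_cases hβ : a ≤ w i
    · have up : ∀ t, i ≤ t → t ≤ j → a ≤ w t := by
        intro t ht
        induction t, ht using Nat.le_induction with
        | base => intro _; exact hβ
        | succ t ht ih =>
          intro h
          have h1 : a ≤ w t := ih (by omega)
          have h2 := Claim1 t ht (by omega)
          rw [decide_eq_true hβ] at h2
          exact le_trans h1 (of_decide_eq_true h2)
      have down : ∀ d t, t + d = j → i ≤ t → w t ≤ a := by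
        intro d
        induction d with
        | zero =>
          intro t h _
          have : t = j := by omega
          subst this
          simp [hw]
        | succ d ih =>
          intro t h hit
          have h2 := Claim1 t hit (by omega)
          rw [decide_eq_true hβ] at h2
          exact le_trans (of_decide_eq_true h2) (ih (t+1) (by omega) (by omega))
      intro t hit htj
      have h1 : w t = a := le_antisymm (down (j - t) t (by omega) hit) (up t hit (by omega))
      rw [hw] at h1
      simpa [htj] using h1
    · exfalso
      have up2 : ∀ t, i ≤ t → t < j → w t < a := by
        intro t ht
        induction t, ht using Nat.le_induction with
        | base => intro _; exact lt_of_not_ge hβ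
        | succ t ht ih =>
          intro h
          have h1 : w t < a := ih (by omega)
          have h2 := Claim1 t ht (by omega)
          rw [decide_eq_false hβ] at h2
          exact lt_trans (lt_of_not_ge (of_decide_eq_false h2)) h1
      have h1 := Claim1 (j-1) (by omega) (by omega)
      rw [decide_eq_false hβ] at h1
      have h2 : (j - 1) + 1 = j := by omega
      rw [h2] at h1
      have h3 : w j = a := by simp [hw]
      rw [h3] at h1
      have h4 := lt_of_not_ge (of_decide_eq_false h1)
      have h5 := up2 (j-1) (by omega) (by omega)
      exact absurd (lt_trans h4 h5) (lt_irrefl a)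
  exact insertIdx_eq_of_window 0 v a i j (by omega) hj window

/-- plain sum of values -/
def ssum (l : List (Fin 11)) : ℕ := (l.map Fin.val).sum

theorem ssum_insertIdx : ∀ (p : ℕ) (l : List (Fin 11)) (c : Fin 11), p ≤ l.length →
    ssum (l.insertIdx p c) = c.val + ssum l
  | 0, l, c, _ => by simp [ssum]
  | (p+1), [], c, h => by simp at h
  | (p+1), a :: l, c, h => by
      rw [List.insertIdx_succ_cons]
      simp only [ssum, List.map_cons, List.sum_cons]
      have := ssum_insertIdx p l c (by simpa using h)
      simp only [ssum] at this
      rw [this]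
      ring

/-- The q-ary single-deletion code theorem (Tenengolts-style). -/
theorem code_thm (u u' : List (Fin 11)) (hlen : u.length = u'.length) (hpos : 1 ≤ u.length)
    (hvt : vts (sg u) % u.length = vts (sg u') % u.length)
    (hsum : ssum u % 11 = ssum u' % 11)
    (i j : ℕ) (hi : i < u.length) (hj : j < u'.length)
    (he : u.eraseIdx i = u'.eraseIdx j) : u = u' := by
  -- signatures are equal
  have hsg_len : (sg u).length = (sg u').length := by
    rw [sg_length, sg_length, hlen]
  have hsgu_len : (sg u).length + 1 = u.length := by
    rw [sg_length]; omega
  have hsg : sg u = sg u' := by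
    obtain ⟨p, hp⟩ := sg_eraseIdx u i
    obtain ⟨p', hp'⟩ := sg_eraseIdx u' j
    apply vt_core (sg u) (sg u') hsg_len (by rw [hsgu_len]; exact hvt) p p'
    rw [← hp, ← hp', he]
  -- the deleted symbols are equal
  have hvl : (u.eraseIdx i).length + 1 = u.length := List.length_eraseIdx_add_one hi
  have hu : (u.eraseIdx i).insertIdx i (u.get ⟨i, hi⟩) = u := insertIdx_eraseIdx u i hi
  have hu' : (u.eraseIdx i).insertIdx j (u'.get ⟨j, hj⟩) = u' := by
    rw [he]; exact insertIdx_eraseIdx u' j hj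
  have hsum_u : ssum u = (u.get ⟨i, hi⟩).val + ssum (u.eraseIdx i) := by
    conv_lhs => rw [← hu]
    exact ssum_insertIdx i _ _ (by omega)
  have hsum_u' : ssum u' = (u'.get ⟨j, hj⟩).val + ssum (u.eraseIdx i) := by
    conv_lhs => rw [← hu']
    exact ssum_insertIdx j _ _ (by omega)
  have hab : (u.get ⟨i, hi⟩) = (u'.get ⟨j, hj⟩) := by
    have h1 : ((u.get ⟨i, hi⟩).val + ssum (u.eraseIdx i)) % 11
        = ((u'.get ⟨j, hj⟩).val + ssum (u.eraseIdx i)) % 11 := by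
      rw [← hsum_u, ← hsum_u']; exact hsum
    have h2 : (u.get ⟨i, hi⟩).val % 11 = (u'.get ⟨j, hj⟩).val % 11 :=
      Nat.ModEq.add_right_cancel' _ h1
    have h3 := (u.get ⟨i, hi⟩).isLt
    have h4 := (u'.get ⟨j, hj⟩).isLt
    rw [Nat.mod_eq_of_lt h3, Nat.mod_eq_of_lt h4] at h2
    exact Fin.ext h2
  have hu'2 : (u.eraseIdx i).insertIdx j (u.get ⟨i, hi⟩) = u' := by
    rw [hab]; exact hu'
  rcases lt_trichotomy i j with h | h | h
  · have hss : sg ((u.eraseIdx i).insertIdx i (u.get ⟨i, hi⟩))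
        = sg ((u.eraseIdx i).insertIdx j (u.get ⟨i, hi⟩)) := by
      rw [hu, hu'2]; exact hsg
    have heq := sg_insert_same _ _ i j h (by omega) hss
    exact hu.symm.trans (heq.trans hu'2)
  · subst h
    exact hu.symm.trans hu'2
  · have hss : sg ((u.eraseIdx i).insertIdx j (u.get ⟨i, hi⟩))
        = sg ((u.eraseIdx i).insertIdx i (u.get ⟨i, hi⟩)) := by
      rw [hu, hu'2]; exact hsg.symm
    have heq := sg_insert_same _ _ j i h (by omega) hss
    exact hu.symm.trans (heq.symm.trans hu'2)

end Stmt6Aux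

namespace Stmt6Aux

/-- If the `0`-appended lists have intersecting deletion balls, then the bases are
equal or have a common single-deletion. -/
theorem ball_reduce (w w' : List (Fin 11)) (hl : w.length = w'.length)
    (v : List (Fin 11)) (h1 : v ∈ delBall1 (w ++ [0])) (h2 : v ∈ delBall1 (w' ++ [0])) :
    w = w' ∨ ∃ i < w.length, ∃ j < w'.length, w.eraseIdx i = w'.eraseIdx j := by
  have erase_last : ∀ (z : List (Fin 11)) (i : ℕ), i = z.length →
      (z ++ [(0 : Fin 11)]).eraseIdx i = z := by
    intro z i hi
    rw [List.eraseIdx_append_of_length_le (by omega)]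
    subst hi
    simp
  have erase_lt : ∀ (z : List (Fin 11)) (i : ℕ), i < z.length →
      (z ++ [(0 : Fin 11)]).eraseIdx i = z.eraseIdx i ++ [0] := by
    intro z i hi
    rw [List.eraseIdx_append_of_lt_length hi]
  have app_cancel : ∀ (z z' : List (Fin 11)), z ++ [(0 : Fin 11)] = z' ++ [0] → z = z' := by
    intro z z' h
    have := List.append_inj_left' h (by simp)
    exact this
  rcases h1 with h1 | h1 <;> rcases h2 with h2 | h2
  · -- v = w++[0] = w'++[0]
    left
    exact app_cancel _ _ (h1 ▸ h2 ▸ rfl)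
  · -- v = w++[0], v = (w'++[0]).eraseIdx j
    exfalso
    obtain ⟨j, hj, hv⟩ := h2
    simp only [List.length_append, List.length_singleton] at hj
    have hlen1 : v.length = w.length + 1 := by rw [h1]; simp
    have hlen2 : v.length = w'.length := by
      rw [hv]
      rw [List.length_eraseIdx]
      simp [hj]
    omega
  · exfalso
    obtain ⟨i, hi, hv⟩ := h1
    simp only [List.length_append, List.length_singleton] at hi
    have hlen1 : v.length = w'.length + 1 := by rw [h2]; simp
    have hlen2 : v.length = w.length := by
      rw [hv, List.length_eraseIdx]
      simp [hi]
    omega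
  · obtain ⟨i, hi, hvi⟩ := h1
    obtain ⟨j, hj, hvj⟩ := h2
    simp only [List.length_append, List.length_singleton] at hi hj
    have he : (w ++ [(0:Fin 11)]).eraseIdx i = (w' ++ [0]).eraseIdx j := by rw [← hvi, ← hvj]
    rcases Nat.lt_or_ge i w.length with hiw | hiw <;> rcases Nat.lt_or_ge j w'.length with hjw | hjw
    · right
      refine ⟨i, hiw, j, hjw, ?_⟩
      rw [erase_lt w i hiw, erase_lt w' j hjw] at he
      exact app_cancel _ _ he
    · -- j = w'.length : w.eraseIdx i ++ [0] = w'
      have hj' : j = w'.length := by omega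
      rw [erase_lt w i hiw, erase_last w' j hj'] at he
      right
      have hw'len : 0 < w'.length := by omega
      refine ⟨i, hiw, w'.length - 1, by omega, ?_⟩
      have h9 : w'.eraseIdx (w'.length - 1) = w.eraseIdx i := by
        rw [← he]
        have h8 : (w.eraseIdx i ++ [(0:Fin 11)]).length - 1 = (w.eraseIdx i).length := by simp
        rw [h8]
        exact erase_last _ _ rfl
      exact h9.symm
    · have hi' : i = w.length := by omega
      rw [erase_last w i hi', erase_lt w' j hjw] at he
      right
      have hwlen : 0 < w.length := by omega
      refine ⟨w.length - 1, by omega, j, hjw, ?_⟩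
      rw [he]
      have h8 : (w'.eraseIdx j ++ [(0:Fin 11)]).length - 1 = (w'.eraseIdx j).length := by simp
      rw [h8]
      exact erase_last _ _ rfl
    · left
      have hi' : i = w.length := by omega
      have hj' : j = w'.length := by omega
      rw [erase_last w i hi', erase_last w' j hj'] at he
      exact he

/-- the concrete label table: `lab a b` is `j+1` if `S10 j = (a,b)`, else `0`. -/
def lab : Fin 4 → Fin 4 → Fin 11 :=
  ![![0,1,0,0], ![2,0,0,0], ![3,4,5,6], ![7,8,9,10]]

/-- the list of the first `m` labels of `x : Fin (m+1) → Fin 4` -/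
def wl (m : ℕ) (x : Fin (m+1) → Fin 4) : List (Fin 11) :=
  List.ofFn (fun i : Fin m =>
    lab (x ⟨i.1, Nat.lt_succ_of_lt i.isLt⟩) (x ⟨i.1+1, Nat.succ_lt_succ i.isLt⟩))

theorem labelFun_S10_eval {n : ℕ} (x : Fin n → Fin 4) (i : Fin n) (h : (i:ℕ)+1 < n) :
    labelFun S10 x i = lab (x i) (x ⟨(i:ℕ)+1, h⟩) := by
  unfold labelFun
  rw [dif_pos h]
  by_cases h2 : ∃ j, S10 j = (x i, x ⟨(i:ℕ)+1, h⟩)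
  · rw [dif_pos h2]
    have key : ∀ (p : Fin 4 × Fin 4) (j : Fin 10), S10 j = p → Fin.succ j = lab p.1 p.2 := by
      decide
    exact key _ _ h2.choose_spec
  · rw [dif_neg h2]
    have key0 : ∀ (p : Fin 4 × Fin 4), (¬ ∃ j, S10 j = p) → (0 : Fin 11) = lab p.1 p.2 := by
      decide
    exact key0 _ h2

theorem labelFun_S10_last {n : ℕ} (x : Fin n → Fin 4) (i : Fin n) (h : ¬ ((i:ℕ)+1 < n)) :
    labelFun S10 x i = 0 := by
  unfold labelFun
  rw [dif_neg h]

theorem ofFn_labelFun (m : ℕ) (x : Fin (m+1) → Fin 4) :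
    List.ofFn (labelFun S10 x) = wl m x ++ [0] := by
  apply List.ext_getElem
  · simp [wl]
  intro t h1 h2
  rw [List.getElem_ofFn]
  have ht : t < m + 1 := by simpa using h1
  rcases Nat.lt_or_ge t m with htm | htm
  · rw [List.getElem_append_left (by simp [wl]; omega)]
    rw [labelFun_S10_eval x ⟨t, ht⟩ (by simpa using Nat.succ_lt_succ htm)]
    simp only [wl, List.getElem_ofFn]
  · have htm' : t = m := by omega
    rw [List.getElem_append_right (by simp [wl]; omega)]
    rw [labelFun_S10_last x ⟨t, ht⟩ (by simp; omega)]
    simp [wl, htm']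

theorem wl_length (m : ℕ) (x : Fin (m+1) → Fin 4) : (wl m x).length = m := by simp [wl]

set_option maxHeartbeats 2000000 in
/-- labels determine the sequence on the good set -/
theorem wl_inj (m : ℕ) (hm : 2 ≤ m) (x x' : Fin (m+1) → Fin 4)
    (hx0 : x ⟨0, by omega⟩ = 2 ∨ x ⟨0, by omega⟩ = 3)
    (hx0' : x' ⟨0, by omega⟩ = 2 ∨ x' ⟨0, by omega⟩ = 3)
    (hxm : x ⟨m-1, by omega⟩ = 2 ∨ x ⟨m-1, by omega⟩ = 3)
    (hxm' : x' ⟨m-1, by omega⟩ = 2 ∨ x' ⟨m-1, by omega⟩ = 3)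
    (hw : wl m x = wl m x') : x = x' := by
  have hw0 := List.ofFn_injective hw
  have hw' : ∀ i (h : i < m), lab (x ⟨i, by omega⟩) (x ⟨i+1, by omega⟩)
      = lab (x' ⟨i, by omega⟩) (x' ⟨i+1, by omega⟩) := by
    intro i h
    exact congrFun hw0 ⟨i, h⟩
  have F1 : ∀ a b a' b' : Fin 4, lab a b = lab a' b' → (a = 2 ∨ a = 3) →
      (a' = 2 ∨ a' = 3) → a = a' := by decide
  have F2 : ∀ a b a' b' : Fin 4, lab a b = lab a' b' → lab a b ≠ 0 → a = a' ∧ b = b' := by decide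
  have F3 : ∀ a b : Fin 4, (a = 2 ∨ a = 3) → lab a b ≠ 0 := by decide
  have F4 : ∀ a b c : Fin 4, lab a b = 0 → lab b c = 0 → b = a := by decide
  have key : ∀ i (h : i ≤ m), x ⟨i, by omega⟩ = x' ⟨i, by omega⟩ := by
    intro i
    induction i with
    | zero =>
      intro _
      exact F1 _ _ _ _ (hw' 0 (by omega)) hx0 hx0'
    | succ i ih =>
      intro h
      have hih := ih (by omega)
      have e := hw' i (by omega)
      by_cases hz : lab (x ⟨i, by omega⟩) (x ⟨i+1, by omega⟩) = 0
      · have hz' : lab (x' ⟨i, by omega⟩) (x' ⟨i+1, by omega⟩) = 0 := by rw [← e]; exact hz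
        by_cases him : i = m - 1
        · exfalso
          have e1 : (⟨i, by omega⟩ : Fin (m+1)) = ⟨m-1, by omega⟩ := Fin.ext him
          rw [e1] at hz
          exact F3 _ _ hxm hz
        · have hi1 : i + 1 < m := by omega
          have e2 := hw' (i+1) hi1
          by_cases hz2 : lab (x ⟨i+1, by omega⟩) (x ⟨i+1+1, by omega⟩) = 0
          · have hz2' : lab (x' ⟨i+1, by omega⟩) (x' ⟨i+1+1, by omega⟩) = 0 := by
              rw [← e2]; exact hz2
            have hx1 : x ⟨i+1, by omega⟩ = x ⟨i, by omega⟩ := F4 _ _ _ hz hz2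
            have hx1' : x' ⟨i+1, by omega⟩ = x' ⟨i, by omega⟩ := F4 _ _ _ hz' hz2'
            rw [hx1, hx1']
            exact hih
          · exact (F2 _ _ _ _ e2 hz2).1
      · exact (F2 _ _ _ _ e hz).2
  funext i
  have := key i.1 (by omega)
  simpa using this

end Stmt6Aux

namespace Stmt6Aux

def e2 : Fin 2 → Fin 4 := ![2, 3]

def enc (m : ℕ) (hm : 4 ≤ m) (d : Fin 2 × Fin 2 × (Fin (m-1) → Fin 4)) : Fin (m+1) → Fin 4 :=
  fun i => if i.1 = 0 then e2 d.1
    else if i.1 = m-1 then e2 d.2.1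
    else if i.1 = m then d.2.2 ⟨m-2, by omega⟩
    else d.2.2 ⟨min (i.1 - 1) (m-3), by omega⟩

theorem enc_at0 (m : ℕ) (hm : 4 ≤ m) (d : Fin 2 × Fin 2 × (Fin (m-1) → Fin 4)) :
    enc m hm d ⟨0, by omega⟩ = e2 d.1 := by
  unfold enc
  rw [if_pos rfl]

theorem enc_atm1 (m : ℕ) (hm : 4 ≤ m) (d : Fin 2 × Fin 2 × (Fin (m-1) → Fin 4)) :
    enc m hm d ⟨m-1, by omega⟩ = e2 d.2.1 := by
  unfold enc
  rw [if_neg (by simp; omega), if_pos rfl]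

theorem enc_atm (m : ℕ) (hm : 4 ≤ m) (d : Fin 2 × Fin 2 × (Fin (m-1) → Fin 4)) :
    enc m hm d ⟨m, by omega⟩ = d.2.2 ⟨m-2, by omega⟩ := by
  unfold enc
  rw [if_neg (by simp; omega), if_neg (by simp; omega), if_pos rfl]

theorem enc_mid (m : ℕ) (hm : 4 ≤ m) (d : Fin 2 × Fin 2 × (Fin (m-1) → Fin 4))
    (t : ℕ) (ht : 1 ≤ t) (ht2 : t ≤ m - 2) :
    enc m hm d ⟨t, by omega⟩ = d.2.2 ⟨t - 1, by omega⟩ := by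
  unfold enc
  rw [if_neg (by simp; omega), if_neg (by simp; omega), if_neg (by simp; omega)]
  have hix : (⟨min (t - 1) (m-3), by omega⟩ : Fin (m-1)) = ⟨t - 1, by omega⟩ := by
    apply Fin.ext
    show min (t-1) (m-3) = t - 1
    omega
  rw [hix]

theorem e2_cases : ∀ u : Fin 2, e2 u = 2 ∨ e2 u = 3 := by decide

theorem enc_inj (m : ℕ) (hm : 4 ≤ m) : Function.Injective (enc m hm) := by
  intro d d' h
  have e2i : ∀ u v : Fin 2, e2 u = e2 v → u = v := by decide
  obtain ⟨a, b, y⟩ := d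
  obtain ⟨a', b', y'⟩ := d'
  have h0 : a = a' := by
    apply e2i
    rw [← enc_at0 m hm (a, b, y), ← enc_at0 m hm (a', b', y'), h]
  have h1 : b = b' := by
    apply e2i
    rw [← enc_atm1 m hm (a, b, y), ← enc_atm1 m hm (a', b', y'), h]
  have h2 : y = y' := by
    funext j
    rcases Nat.lt_or_ge j.1 (m-2) with hj | hj
    · have hja : j = ⟨(j.1+1) - 1, by omega⟩ := by apply Fin.ext; simp
      rw [hja]
      calc y ⟨(j.1+1) - 1, by omega⟩
          = enc m hm (a, b, y) ⟨j.1+1, by omega⟩ :=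
            (enc_mid m hm (a, b, y) (j.1+1) (by omega) (by omega)).symm
        _ = enc m hm (a', b', y') ⟨j.1+1, by omega⟩ := by rw [h]
        _ = y' ⟨(j.1+1) - 1, by omega⟩ :=
            enc_mid m hm (a', b', y') (j.1+1) (by omega) (by omega)
    · have hj2 : j.1 = m - 2 := by omega
      have hja : j = ⟨m-2, by omega⟩ := by apply Fin.ext; simpa using hj2
      rw [hja]
      calc y ⟨m-2, by omega⟩
          = enc m hm (a, b, y) ⟨m, by omega⟩ := (enc_atm m hm (a, b, y)).symm
        _ = enc m hm (a', b', y') ⟨m, by omega⟩ := by rw [h]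
        _ = y' ⟨m-2, by omega⟩ := enc_atm m hm (a', b', y')
  rw [h0, h1, h2]

/-- syndrome key -/
def keyFun (m : ℕ) (hm : 4 ≤ m) (d : Fin 2 × Fin 2 × (Fin (m-1) → Fin 4)) : Fin m × Fin 11 :=
  (⟨vts (sg (wl m (enc m hm d))) % m, Nat.mod_lt _ (by omega)⟩,
   ⟨ssum (wl m (enc m hm d)) % 11, Nat.mod_lt _ (by omega)⟩)

set_option maxHeartbeats 2000000 in
/-- Master construction: a single-deletion labeling code of any size `N` with
`m * 11 * N ≤ 4 ^ m`, inside `Σ₄^(m+1)`. -/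
theorem master (m : ℕ) (hm : 4 ≤ m) (N : ℕ) (hN : m * 11 * N ≤ 4 ^ m) :
    ∃ C : Set (Fin (m+1) → Fin 4), C.ncard = N ∧
      ∀ x ∈ C, ∀ x' ∈ C, x ≠ x' →
        ∀ v : List (Fin 11),
          v ∈ delBall1 (List.ofFn (labelFun S10 x)) →
          v ∈ delBall1 (List.ofFn (labelFun S10 x')) → False := by
  have hcard : Fintype.card (Fin 2 × Fin 2 × (Fin (m-1) → Fin 4)) = 4 ^ m := by
    rw [Fintype.card_prod, Fintype.card_prod, Fintype.card_fun, Fintype.card_fin,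
      Fintype.card_fin, Fintype.card_fin]
    have h4 : 4 ^ m = 4 * 4 ^ (m-1) := by
      conv_lhs => rw [show m = (m-1)+1 by omega]
      rw [pow_succ]
      ring
    rw [h4]
    ring
  have maps : ∀ d ∈ (Finset.univ : Finset (Fin 2 × Fin 2 × (Fin (m-1) → Fin 4))),
      keyFun m hm d ∈ (Finset.univ : Finset (Fin m × Fin 11)) := by
    intro d _
    exact Finset.mem_univ _
  have hne : (Finset.univ : Finset (Fin m × Fin 11)).Nonempty :=
    ⟨(⟨0, by omega⟩, ⟨0, by omega⟩), Finset.mem_univ _⟩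
  have hle : (Finset.univ : Finset (Fin m × Fin 11)).card * N
      ≤ (Finset.univ : Finset (Fin 2 × Fin 2 × (Fin (m-1) → Fin 4))).card := by
    rw [Finset.card_univ, Finset.card_univ, hcard, Fintype.card_prod, Fintype.card_fin,
      Fintype.card_fin]
    exact hN
  obtain ⟨s0, _, hs0⟩ := Finset.exists_le_card_fiber_of_mul_le_card_of_maps_to maps hne hle
  obtain ⟨F', hF'sub, hF'card⟩ := Finset.exists_subset_card_eq hs0
  refine ⟨↑(F'.image (enc m hm)), ?_, ?_⟩
  · rw [Set.ncard_coe_finset, Finset.card_image_of_injective F' (enc_inj m hm), hF'card]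
  intro x hx x' hx' hxne v hv hv'
  simp only [Finset.coe_image, Set.mem_image, Finset.mem_coe] at hx hx'
  obtain ⟨d, hd, rfl⟩ := hx
  obtain ⟨d', hd', rfl⟩ := hx'
  have hkey : keyFun m hm d = keyFun m hm d' := by
    have k1 := (Finset.mem_filter.mp (hF'sub hd)).2
    have k2 := (Finset.mem_filter.mp (hF'sub hd')).2
    rw [k1, k2]
  have hvt : vts (sg (wl m (enc m hm d))) % m = vts (sg (wl m (enc m hm d'))) % m := by
    have h5 := congrArg (fun p => (p.1 : ℕ)) hkey
    simpa [keyFun] using h5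
  have hsum : ssum (wl m (enc m hm d)) % 11 = ssum (wl m (enc m hm d')) % 11 := by
    have h5 := congrArg (fun p => (p.2 : ℕ)) hkey
    simpa [keyFun] using h5
  have hwne : wl m (enc m hm d) ≠ wl m (enc m hm d') := by
    intro hcontra
    apply hxne
    apply wl_inj m (by omega) _ _ _ _ _ _ hcontra
    · rw [enc_at0]; exact e2_cases _
    · rw [enc_at0]; exact e2_cases _
    · rw [enc_atm1]; exact e2_cases _
    · rw [enc_atm1]; exact e2_cases _
  rw [ofFn_labelFun] at hv hv'
  have hlw : (wl m (enc m hm d)).length = m := wl_length m _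
  have hlw' : (wl m (enc m hm d')).length = m := wl_length m _
  rcases ball_reduce _ _ (by rw [hlw, hlw']) v hv hv' with h | ⟨i, hi, j, hj, he⟩
  · exact hwne h
  · apply hwne
    apply code_thm _ _ (by rw [hlw, hlw']) (by omega) _ _ i j hi hj he
    · rw [hlw]
      exact hvt
    · exact hsum

end Stmt6Aux

open Stmt6Aux in
theorem stmt6' (k : ℕ) (hk : 2 ≤ k) :
    ∃ n : ℕ, 2 * ((n : ℤ) - (k : ℤ)) ≤ (Nat.clog 2 k : ℤ) + 8 ∧
      ∃ C : Set (Fin n → Fin 4), C.ncard = 4 ^ k ∧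
        ∀ x ∈ C, ∀ x' ∈ C, x ≠ x' →
          ∀ v : List (Fin 11),
            v ∈ delBall1 (List.ofFn (labelFun S10 x)) →
            v ∈ delBall1 (List.ofFn (labelFun S10 x')) → False := by
  set c := Nat.clog 2 k with hc
  set q := c / 2 with hq
  refine ⟨(k + q + 3) + 1, ?_, ?_⟩
  · have h2q : 2 * q ≤ c := by omega
    push_cast
    omega
  · have hm : 4 ≤ k + q + 3 := by omega
    have hN : (k + q + 3) * 11 * 4 ^ k ≤ 4 ^ (k + q + 3) := by
      have h1 : k ≤ 2 ^ c := Nat.le_pow_clog (by norm_num) k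
      have h2 : 2 ^ c ≤ 2 * 4 ^ q := by
        have hcq : c ≤ 2 * q + 1 := by omega
        calc 2 ^ c ≤ 2 ^ (2*q+1) := Nat.pow_le_pow_right (by norm_num) hcq
          _ = 2 * 4 ^ q := by
              rw [pow_succ, pow_mul]
              norm_num
              ring
      have h3 : q ≤ 4 ^ q := le_of_lt (Nat.lt_pow_self (n := q) (by norm_num))
      have hkey : (k + q + 3) * 11 ≤ 4 ^ (q + 3) := by
        have h4 : 4 ^ (q+3) = 64 * 4 ^ q := by
          rw [pow_add]
          ring
        rcases Nat.eq_zero_or_pos q with hq0 | hq0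
        · rw [hq0] at h2 ⊢
          simp at h2
          norm_num
          omega
        · have h5 : 4 ≤ 4 ^ q := by
            calc (4:ℕ) = 4 ^ 1 := by norm_num
              _ ≤ 4 ^ q := Nat.pow_le_pow_right (by norm_num) hq0
          nlinarith
      calc (k + q + 3) * 11 * 4 ^ k ≤ 4 ^ (q+3) * 4 ^ k :=
            Nat.mul_le_mul_right _ hkey
        _ = 4 ^ (k + q + 3) := by
            rw [← pow_add]
            congr 1
            omega
    obtain ⟨C, hC, hcode⟩ := master (k+q+3) hm (4^k) hN
    exact ⟨C, hC, hcode⟩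

/-- For the DNA label set `S10`, for every `k ≥ 2` there exist
`n` with `2(n−k) ≤ ⌈log₂ k⌉ + 8` and a code `C ⊆ Σ₄^n` with `|C| = 4^k` that is
a single-deletion `S10`-labeling code. -/
theorem stmt6 (k : ℕ) (hk : 2 ≤ k) :
    ∃ n : ℕ, 2 * ((n : ℤ) - (k : ℤ)) ≤ (Nat.clog 2 k : ℤ) + 8 ∧
      ∃ C : Set (Fin n → Fin 4), C.ncard = 4 ^ k ∧
        ∀ x ∈ C, ∀ x' ∈ C, x ≠ x' →
          ∀ v : List (Fin 11),
            v ∈ delBall1 (List.ofFn (labelFun S10 x)) →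
            v ∈ delBall1 (List.ofFn (labelFun S10 x')) → False := by
  exact stmt6' k hk
end

section
/- Fix q ≥ 2, n ≥ 1, and boundary symbols x_0, x_{n+1} ∈ Σ_q. For x ∈ Σ_q^n, define D(x) = (x_1 − x_0, x_2 − x_1, …, x_{n+1} − x_n) ∈ Σ_q^{n+1}, with subtraction modulo q. Let C' ⊆ {d ∈ Σ_q^{n+1} : Σ_{i=1}^{n+1} d_i ≡ x_{n+1} − x_0 (mod q)} and let C = {x ∈ Σ_q^n : D(x) ∈ C'}. Then C' is a zero-deletion code if and only if C is a single-deletion labeling code for the pair-read labeling with boundary symbols x_0, x_{n+1}, i.e., for all distinct x, x' ∈ C, no sequence can be obtained from both L(x) and L(x') by deleting at most one coordinate. -/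
/-- The derivative `D(x) = (x₁−x₀, x₂−x₁, …, x_{n+1}−x_n)` of the extended word
`x₀ x x_{n+1}`, with subtraction modulo `q`. -/
def derivWord {q n : ℕ} (x0 xe : Fin q) (x : Fin n → Fin q) : Fin (n + 1) → Fin q :=
  fun i => extWord x0 xe x i.succ - extWord x0 xe x i.castSucc

section aux

variable {q n : ℕ} [NeZero q]

/-- ℕ-indexed extended word (clamped to `0` out of range). -/
def Wd (x0 xe : Fin q) (x : Fin n → Fin q) (m : ℕ) : Fin q :=
  if h : m < n + 2 then extWord x0 xe x ⟨m, h⟩ else 0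

/-- ℕ-indexed derivative. -/
def dW (x0 xe : Fin q) (x : Fin n → Fin q) (m : ℕ) : Fin q :=
  Wd x0 xe x (m + 1) - Wd x0 xe x m

variable (x0 xe : Fin q)

lemma Wd_zero (x : Fin n → Fin q) : Wd x0 xe x 0 = x0 := by
  rw [Wd, dif_pos (by omega)]
  have h : (⟨0, by omega⟩ : Fin (n + 2)) = 0 := by ext; simp
  rw [h, extWord, Fin.cons_zero]

lemma Wd_last (x : Fin n → Fin q) : Wd x0 xe x (n + 1) = xe := by
  rw [Wd, dif_pos (by omega)]
  have h : (⟨n + 1, by omega⟩ : Fin (n + 2)) = Fin.last (n + 1) := by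
    ext; simp [Fin.last]
  rw [h, extWord, ← Fin.succ_last, Fin.cons_succ, Fin.snoc_last]

lemma Wd_coord (x : Fin n → Fin q) (k : Fin n) : x k = Wd x0 xe x ((k : ℕ) + 1) := by
  rw [Wd, dif_pos (by have := k.isLt; omega)]
  have h : (⟨(k : ℕ) + 1, by have := k.isLt; omega⟩ : Fin (n + 2)) = (Fin.castSucc k).succ := by
    ext; simp
  rw [h, extWord, Fin.cons_succ, Fin.snoc_castSucc]

lemma deriv_eq_dW (x : Fin n → Fin q) {m : ℕ} (hm : m < n + 1) :
    derivWord x0 xe x ⟨m, hm⟩ = dW x0 xe x m := by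
  have h1 : (⟨m, hm⟩ : Fin (n + 1)).succ = ⟨m + 1, by omega⟩ := by ext; simp
  have h2 : (⟨m, hm⟩ : Fin (n + 1)).castSucc = ⟨m, by omega⟩ := by ext; simp
  rw [derivWord, h1, h2, dW, Wd, Wd, dif_pos (by omega), dif_pos (by omega)]

lemma Wd_succ (x : Fin n → Fin q) (m : ℕ) :
    Wd x0 xe x (m + 1) = Wd x0 xe x m + dW x0 xe x m := by
  rw [dW]; abel

lemma Wd_ge (x x' : Fin n → Fin q) {m : ℕ} (hm : n + 1 ≤ m) :
    Wd x0 xe x m = Wd x0 xe x' m := by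
  rcases eq_or_lt_of_le hm with rfl | h
  · rw [Wd_last, Wd_last]
  · rw [Wd, Wd, dif_neg (by omega), dif_neg (by omega)]

lemma dW_ge (x x' : Fin n → Fin q) {m : ℕ} (hm : n + 1 ≤ m) :
    dW x0 xe x m = dW x0 xe x' m := by
  rw [dW, dW, Wd_ge x0 xe x x' hm, Wd_ge x0 xe x x' (by omega : n + 1 ≤ m + 1)]

lemma Wd_inj {x x' : Fin n → Fin q} (h : ∀ m, Wd x0 xe x m = Wd x0 xe x' m) : x = x' := by
  funext k
  rw [Wd_coord x0 xe x k, Wd_coord x0 xe x' k, h]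

lemma deriv_inj {x x' : Fin n → Fin q}
    (h : derivWord x0 xe x = derivWord x0 xe x') : x = x' := by
  apply Wd_inj x0 xe
  intro m
  induction m with
  | zero => rw [Wd_zero, Wd_zero]
  | succ m ih =>
    rw [Wd_succ, Wd_succ, ih]
    congr 1
    by_cases hm : m < n + 1
    · rw [← deriv_eq_dW x0 xe x hm, ← deriv_eq_dW x0 xe x' hm, h]
    · exact dW_ge x0 xe x x' (by omega)

lemma pairLabel_eq_ofFn (x : Fin n → Fin q) :
    pairLabel x0 xe x =
      List.ofFn (fun i : Fin (n + 1) => (Wd x0 xe x i, Wd x0 xe x ((i : ℕ) + 1))) := by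
  rw [pairLabel]
  congr 1
  funext i
  have h1 : Wd x0 xe x i = extWord x0 xe x i.castSucc := by
    rw [Wd, dif_pos (by have := i.isLt; omega)]
    congr 1
  have h2 : Wd x0 xe x ((i : ℕ) + 1) = extWord x0 xe x i.succ := by
    rw [Wd, dif_pos (by have := i.isLt; omega)]
    congr 1
  rw [h1, h2]

lemma length_pairLabel (x : Fin n → Fin q) : (pairLabel x0 xe x).length = n + 1 := by
  rw [pairLabel, List.length_ofFn]

lemma pairLabel_inj {x x' : Fin n → Fin q}
    (h : pairLabel x0 xe x = pairLabel x0 xe x') : x = x' := by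
  rw [pairLabel_eq_ofFn, pairLabel_eq_ofFn] at h
  have h2 := List.ofFn_inj.mp h
  funext k
  have h3 := congrFun h2 ⟨(k : ℕ), by have := k.isLt; omega⟩
  have h4 := congrArg Prod.snd h3
  rw [Wd_coord x0 xe x k, Wd_coord x0 xe x' k]
  exact h4

lemma length_erase_ofFn {α : Type*} {m : ℕ} (u : Fin (m + 1) → α) {i : ℕ} (hi : i ≤ m) :
    ((List.ofFn u).eraseIdx i).length = m := by
  rw [List.length_eraseIdx]
  simp only [List.length_ofFn]
  rw [if_pos (by omega)]
  omega

lemma erase_ofFn_eq_iff {α : Type*} {m : ℕ} (u v : Fin (m + 1) → α) {i j : ℕ}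
    (hi : i ≤ m) (hj : j ≤ m) :
    (List.ofFn u).eraseIdx i = (List.ofFn v).eraseIdx j ↔
      ∀ k : ℕ, ∀ hk : k < m,
        u (if k < i then ⟨k, by omega⟩ else ⟨k + 1, by omega⟩) =
        v (if k < j then ⟨k, by omega⟩ else ⟨k + 1, by omega⟩) := by
  constructor
  · intro h k hk
    have h2 := List.getElem_of_eq h (i := k)
      (by rw [length_erase_ofFn u hi]; exact hk)
    rw [List.getElem_eraseIdx, List.getElem_eraseIdx] at h2
    by_cases hki : k < i <;> by_cases hkj : k < j
    · rw [dif_pos hki, dif_pos hkj] at h2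
      simp only [List.getElem_ofFn] at h2
      rw [if_pos hki, if_pos hkj]; exact h2
    · rw [dif_pos hki, dif_neg hkj] at h2
      simp only [List.getElem_ofFn] at h2
      rw [if_pos hki, if_neg hkj]; exact h2
    · rw [dif_neg hki, dif_pos hkj] at h2
      simp only [List.getElem_ofFn] at h2
      rw [if_neg hki, if_pos hkj]; exact h2
    · rw [dif_neg hki, dif_neg hkj] at h2
      simp only [List.getElem_ofFn] at h2
      rw [if_neg hki, if_neg hkj]; exact h2
  · intro h
    apply List.ext_getElem
    · rw [length_erase_ofFn u hi, length_erase_ofFn v hj]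
    · intro k h1 h2
      have hk : k < m := by rw [length_erase_ofFn u hi] at h1; exact h1
      have h3 := h k hk
      rw [List.getElem_eraseIdx, List.getElem_eraseIdx]
      by_cases hki : k < i <;> by_cases hkj : k < j
      · rw [dif_pos hki, dif_pos hkj]
        simp only [List.getElem_ofFn]
        rw [if_pos hki, if_pos hkj] at h3; exact h3
      · rw [dif_pos hki, dif_neg hkj]
        simp only [List.getElem_ofFn]
        rw [if_pos hki, if_neg hkj] at h3; exact h3
      · rw [dif_neg hki, dif_pos hkj]
        simp only [List.getElem_ofFn]
        rw [if_neg hki, if_pos hkj] at h3; exact h3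
      · rw [dif_neg hki, dif_neg hkj]
        simp only [List.getElem_ofFn]
        rw [if_neg hki, if_neg hkj] at h3; exact h3

lemma keyForward {x x' : Fin n → Fin q} {i j : ℕ} (hij : i ≤ j) (hjn : j ≤ n)
    (h : (pairLabel x0 xe x).eraseIdx i = (pairLabel x0 xe x').eraseIdx j) :
    x = x' ∨ (dW x0 xe x i = 0 ∧ dW x0 xe x' j = 0 ∧
      (List.ofFn (derivWord x0 xe x)).eraseIdx i =
        (List.ofFn (derivWord x0 xe x')).eraseIdx j) := by
  rw [pairLabel_eq_ofFn, pairLabel_eq_ofFn,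
    erase_ofFn_eq_iff _ _ (by omega) (by omega)] at h
  have hA : ∀ k, k < i →
      Wd x0 xe x k = Wd x0 xe x' k ∧ Wd x0 xe x (k + 1) = Wd x0 xe x' (k + 1) := by
    intro k hk
    have hh := h k (by omega)
    rw [if_pos hk, if_pos (by omega)] at hh
    exact ⟨congrArg Prod.fst hh, congrArg Prod.snd hh⟩
  have hB : ∀ k, i ≤ k → k < j →
      Wd x0 xe x (k + 1) = Wd x0 xe x' k ∧ Wd x0 xe x (k + 1 + 1) = Wd x0 xe x' (k + 1) := by
    intro k h1 h2
    have hh := h k (by omega)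
    rw [if_neg (by omega), if_pos h2] at hh
    exact ⟨congrArg Prod.fst hh, congrArg Prod.snd hh⟩
  have hC : ∀ k, j ≤ k → k < n →
      Wd x0 xe x (k + 1) = Wd x0 xe x' (k + 1) ∧
        Wd x0 xe x (k + 1 + 1) = Wd x0 xe x' (k + 1 + 1) := by
    intro k h1 h2
    have hh := h k (by omega)
    rw [if_neg (by omega), if_neg (by omega)] at hh
    exact ⟨congrArg Prod.fst hh, congrArg Prod.snd hh⟩
  have hXlow : ∀ m, m ≤ i → Wd x0 xe x m = Wd x0 xe x' m := by
    intro m hm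
    match m with
    | 0 => rw [Wd_zero, Wd_zero]
    | k + 1 => exact (hA k (by omega)).2
  rcases eq_or_lt_of_le hij with rfl | hij'
  · left
    apply Wd_inj x0 xe
    intro m
    by_cases h1 : m ≤ i
    · exact hXlow m h1
    · by_cases h2 : m ≤ n
      · obtain ⟨k, rfl⟩ : ∃ k, m = k + 1 := ⟨m - 1, by omega⟩
        exact (hC k (by omega) (by omega)).1
      · exact Wd_ge x0 xe x x' (by omega)
  · right
    have e1 : Wd x0 xe x (i + 1) = Wd x0 xe x' i := (hB i le_rfl hij').1
    have e0 : Wd x0 xe x i = Wd x0 xe x' i := hXlow i le_rfl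
    have z1 : dW x0 xe x i = 0 := by rw [dW, e1, e0, sub_self]
    obtain ⟨j', rfl⟩ : ∃ j', j = j' + 1 := ⟨j - 1, by omega⟩
    have e2 : Wd x0 xe x (j' + 1 + 1) = Wd x0 xe x' (j' + 1) := (hB j' (by omega) (by omega)).2
    have e3 : Wd x0 xe x (j' + 1 + 1) = Wd x0 xe x' (j' + 1 + 1) := by
      by_cases hjn' : j' + 1 < n
      · exact (hC (j' + 1) le_rfl hjn').1
      · exact Wd_ge x0 xe x x' (by omega)
    have z2 : dW x0 xe x' (j' + 1) = 0 := by rw [dW, ← e3, ← e2, sub_self]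
    refine ⟨z1, z2, ?_⟩
    rw [erase_ofFn_eq_iff _ _ (by omega) (by omega)]
    intro k hk
    by_cases hki : k < i
    · rw [if_pos hki, if_pos (by omega),
        deriv_eq_dW x0 xe x (show k < n + 1 by omega),
        deriv_eq_dW x0 xe x' (show k < n + 1 by omega),
        dW, dW, (hA k hki).1, (hA k hki).2]
    · rw [if_neg hki]
      by_cases hkj : k < j' + 1
      · rw [if_pos hkj,
          deriv_eq_dW x0 xe x (show k + 1 < n + 1 by omega),
          deriv_eq_dW x0 xe x' (show k < n + 1 by omega),
          dW, dW, (hB k (by omega) hkj).1, (hB k (by omega) hkj).2]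
      · rw [if_neg hkj,
          deriv_eq_dW x0 xe x (show k + 1 < n + 1 by omega),
          deriv_eq_dW x0 xe x' (show k + 1 < n + 1 by omega),
          dW, dW, (hC k (by omega) (by omega)).1, (hC k (by omega) (by omega)).2]

lemma keyBackward {x x' : Fin n → Fin q} {i j : ℕ} (hij : i ≤ j) (hjn : j ≤ n)
    (hzi : dW x0 xe x i = 0) (hzj : dW x0 xe x' j = 0)
    (h : (List.ofFn (derivWord x0 xe x)).eraseIdx i =
      (List.ofFn (derivWord x0 xe x')).eraseIdx j) :
    (pairLabel x0 xe x).eraseIdx i = (pairLabel x0 xe x').eraseIdx j := by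
  rw [erase_ofFn_eq_iff _ _ (by omega) (by omega)] at h
  have eqi : Wd x0 xe x (i + 1) = Wd x0 xe x i := sub_eq_zero.mp hzi
  have eqj : Wd x0 xe x' (j + 1) = Wd x0 xe x' j := sub_eq_zero.mp hzj
  have hA : ∀ k, k < i → dW x0 xe x k = dW x0 xe x' k := by
    intro k hk
    have hh := h k (by omega)
    rw [if_pos hk, if_pos (by omega)] at hh
    rw [← deriv_eq_dW x0 xe x (show k < n + 1 by omega),
      ← deriv_eq_dW x0 xe x' (show k < n + 1 by omega)]
    exact hh
  have hB : ∀ k, i ≤ k → k < j → dW x0 xe x (k + 1) = dW x0 xe x' k := by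
    intro k h1 h2
    have hh := h k (by omega)
    rw [if_neg (by omega), if_pos h2] at hh
    rw [← deriv_eq_dW x0 xe x (show k + 1 < n + 1 by omega),
      ← deriv_eq_dW x0 xe x' (show k < n + 1 by omega)]
    exact hh
  have hC : ∀ k, j ≤ k → k < n → dW x0 xe x (k + 1) = dW x0 xe x' (k + 1) := by
    intro k h1 h2
    have hh := h k (by omega)
    rw [if_neg (by omega), if_neg (by omega)] at hh
    rw [← deriv_eq_dW x0 xe x (show k + 1 < n + 1 by omega),
      ← deriv_eq_dW x0 xe x' (show k + 1 < n + 1 by omega)]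
    exact hh
  have hW : ∀ m, m ≤ n + 1 →
      Wd x0 xe x' m = if m ≤ i then Wd x0 xe x m
        else if m ≤ j then Wd x0 xe x (m + 1) else Wd x0 xe x m := by
    intro m
    induction m with
    | zero => intro _; rw [if_pos (by omega), Wd_zero, Wd_zero]
    | succ m ih =>
      intro hm
      have ihm := ih (by omega)
      by_cases h1 : m + 1 ≤ i
      · rw [if_pos h1, Wd_succ x0 xe x' m, Wd_succ x0 xe x m, ihm,
          if_pos (by omega), hA m (by omega)]
      · by_cases h2 : m + 1 ≤ j
        · rw [if_neg h1, if_pos h2]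
          have hx'm : Wd x0 xe x' m = Wd x0 xe x (m + 1) := by
            rw [ihm]
            by_cases h3 : m ≤ i
            · rw [if_pos h3]
              have : m = i := by omega
              subst this
              exact eqi.symm
            · rw [if_neg h3, if_pos (by omega)]
          rw [Wd_succ x0 xe x' m, hx'm, ← hB m (by omega) (by omega), ← Wd_succ]
        · rw [if_neg h1, if_neg h2]
          rcases (show j ≤ m by omega).lt_or_eq with h4 | h4
          · obtain ⟨k, rfl⟩ : ∃ k, m = k + 1 := ⟨m - 1, by omega⟩
            rw [Wd_succ x0 xe x' (k + 1), Wd_succ x0 xe x (k + 1), ihm,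
              if_neg (by omega), if_neg (by omega), ← hC k (by omega) (by omega)]
          · subst h4
            rw [Wd_succ x0 xe x' j, hzj, add_zero, ihm]
            by_cases h5 : j ≤ i
            · have hji : i = j := by omega
              rw [if_pos h5]
              subst hji
              exact eqi.symm
            · rw [if_neg h5, if_pos le_rfl]
  rw [pairLabel_eq_ofFn, pairLabel_eq_ofFn, erase_ofFn_eq_iff _ _ (by omega) (by omega)]
  intro k hk
  by_cases hki : k < i
  · rw [if_pos hki, if_pos (by omega)]
    have g1 : Wd x0 xe x' k = Wd x0 xe x k := by
      rw [hW k (by omega), if_pos (by omega)]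
    have g2 : Wd x0 xe x' (k + 1) = Wd x0 xe x (k + 1) := by
      rw [hW (k + 1) (by omega), if_pos (by omega)]
    show (Wd x0 xe x k, Wd x0 xe x (k + 1)) = (Wd x0 xe x' k, Wd x0 xe x' (k + 1))
    rw [g1, g2]
  · rw [if_neg hki]
    by_cases hkj : k < j
    · rw [if_pos hkj]
      have g1 : Wd x0 xe x' k = Wd x0 xe x (k + 1) := by
        rw [hW k (by omega)]
        by_cases h3 : k ≤ i
        · rw [if_pos h3]
          have : k = i := by omega
          subst this
          exact eqi.symm
        · rw [if_neg h3, if_pos (by omega)]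
      have g2 : Wd x0 xe x' (k + 1) = Wd x0 xe x (k + 1 + 1) := by
        rw [hW (k + 1) (by omega), if_neg (by omega), if_pos (by omega)]
      show (Wd x0 xe x (k + 1), Wd x0 xe x (k + 1 + 1)) =
        (Wd x0 xe x' k, Wd x0 xe x' (k + 1))
      rw [g1, g2]
    · rw [if_neg hkj]
      have g1 : Wd x0 xe x' (k + 1) = Wd x0 xe x (k + 1) := by
        rw [hW (k + 1) (by omega), if_neg (by omega), if_neg (by omega)]
      have g2 : Wd x0 xe x' (k + 1 + 1) = Wd x0 xe x (k + 1 + 1) := by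
        rw [hW (k + 1 + 1) (by omega), if_neg (by omega), if_neg (by omega)]
      show (Wd x0 xe x (k + 1), Wd x0 xe x (k + 1 + 1)) =
        (Wd x0 xe x' (k + 1), Wd x0 xe x' (k + 1 + 1))
      rw [g1, g2]

lemma exists_deriv (c : Fin (n + 1) → Fin q) (hc : ∑ i, c i = xe - x0) :
    ∃ x : Fin n → Fin q, derivWord x0 xe x = c := by
  set T : ℕ → Fin q := fun m => x0 + ∑ l : Fin (n + 1), if (l : ℕ) < m then c l else 0 with hT
  have Tsucc : ∀ m, ∀ hm : m < n + 1, T (m + 1) = T m + c ⟨m, hm⟩ := by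
    intro m hm
    have hsplit : ∀ l : Fin (n + 1), (if (l : ℕ) < m + 1 then c l else 0) =
        (if (l : ℕ) < m then c l else 0) + (if l = ⟨m, hm⟩ then c l else 0) := by
      intro l
      by_cases h1 : (l : ℕ) < m
      · have h2 : l ≠ ⟨m, hm⟩ := by
          intro h; rw [h] at h1; simp at h1
        rw [if_pos (by omega), if_pos h1, if_neg h2, add_zero]
      · by_cases h2 : (l : ℕ) = m
        · have h3 : l = ⟨m, hm⟩ := Fin.ext h2
          rw [if_pos (by omega), if_neg h1, if_pos h3, zero_add]
        · have h3 : l ≠ ⟨m, hm⟩ := by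
            intro h; apply h2; rw [h]
          rw [if_neg (by omega), if_neg h1, if_neg h3, add_zero]
    simp only [hT]
    rw [Finset.sum_congr rfl (fun l _ => hsplit l), Finset.sum_add_distrib,
      Finset.sum_ite_eq' Finset.univ (⟨m, hm⟩ : Fin (n + 1)) c,
      if_pos (Finset.mem_univ _)]
    abel
  have T0 : T 0 = x0 := by simp [hT]
  have Tlast : T (n + 1) = xe := by
    simp only [hT]
    rw [Finset.sum_congr rfl (fun l _ => if_pos l.isLt), hc]
    abel
  refine ⟨fun k : Fin n => T ((k : ℕ) + 1), funext fun i => ?_⟩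
  have hWT : ∀ m, m ≤ n + 1 → Wd x0 xe (fun k : Fin n => T ((k : ℕ) + 1)) m = T m := by
    intro m hm
    match m with
    | 0 => rw [Wd_zero, T0]
    | Nat.succ k =>
      by_cases hk : k < n
      · exact (Wd_coord x0 xe (fun k : Fin n => T ((k : ℕ) + 1)) ⟨k, hk⟩).symm
      · have hkn : k = n := by omega
        subst hkn
        rw [Wd_last, Tlast]
  obtain ⟨m, hm⟩ := i
  rw [deriv_eq_dW x0 xe _ hm, dW, hWT m (by omega), hWT (m + 1) (by omega), Tsucc m hm]
  abel

end aux

/-- With `C' ⊆ {d ∈ Σ_q^{n+1} : Σ dᵢ ≡ x_{n+1} − x₀ (mod q)}`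
and `C = {x ∈ Σ_q^n : D(x) ∈ C'}`, the code `C'` is a zero-deletion code iff `C`
is a single-deletion labeling code for the pair-read labeling with boundary
symbols `x₀, x_{n+1}`. -/
theorem stmt10 (q n : ℕ) [NeZero q] (hq : 2 ≤ q) (hn : 1 ≤ n) (x0 xe : Fin q)
    (C' : Set (Fin (n + 1) → Fin q))
    (hC' : ∀ d ∈ C', ∑ i, d i = xe - x0) :
    (∀ c ∈ C', ∀ c' ∈ C', c ≠ c' →
      ∀ v, v ∈ zeroDelBall (List.ofFn c) → v ∈ zeroDelBall (List.ofFn c') → False) ↔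
    (∀ x ∈ {x : Fin n → Fin q | derivWord x0 xe x ∈ C'},
      ∀ x' ∈ {x : Fin n → Fin q | derivWord x0 xe x ∈ C'}, x ≠ x' →
        ∀ v : List (Fin q × Fin q),
          v ∈ delBall1 (pairLabel x0 xe x) → v ∈ delBall1 (pairLabel x0 xe x') → False) := by
  constructor
  · intro H x hx x' hx' hne v hv hv'
    simp only [delBall1, Set.mem_insert_iff, Set.mem_setOf_eq] at hv hv'
    rcases hv with rfl | ⟨i, hi, rfl⟩
    · rcases hv' with h2 | ⟨j, hj, h2⟩
      · exact hne (pairLabel_inj x0 xe h2)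
      · have hl := congrArg List.length h2
        simp only [length_pairLabel, List.length_eraseIdx] at hl hj
        rw [if_pos (by omega)] at hl
        omega
    · rcases hv' with h2 | ⟨j, hj, h2⟩
      · have hl := congrArg List.length h2
        simp only [length_pairLabel, List.length_eraseIdx] at hl hi
        rw [if_pos (by omega)] at hl
        omega
      · rw [length_pairLabel] at hi hj
        rcases le_total i j with hij | hij
        · rcases keyForward x0 xe hij (by omega) h2 with heq | ⟨z1, z2, he⟩
          · exact hne heq
          · have m1 : (List.ofFn (derivWord x0 xe x)).eraseIdx i ∈
                zeroDelBall (List.ofFn (derivWord x0 xe x)) := by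
              refine ⟨i, by rw [List.length_ofFn]; omega, ?_, rfl⟩
              rw [List.getElem_ofFn, deriv_eq_dW x0 xe x (show i < n + 1 by omega)]
              exact z1
            have m2 : (List.ofFn (derivWord x0 xe x)).eraseIdx i ∈
                zeroDelBall (List.ofFn (derivWord x0 xe x')) := by
              refine ⟨j, by rw [List.length_ofFn]; omega, ?_, he⟩
              rw [List.getElem_ofFn, deriv_eq_dW x0 xe x' (show j < n + 1 by omega)]
              exact z2
            exact H (derivWord x0 xe x) hx (derivWord x0 xe x') hx'
              (fun hcc => hne (deriv_inj x0 xe hcc))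
              ((List.ofFn (derivWord x0 xe x)).eraseIdx i) m1 m2
        · rcases keyForward x0 xe hij (by omega) h2.symm with heq | ⟨z1, z2, he⟩
          · exact hne heq.symm
          · have m1 : (List.ofFn (derivWord x0 xe x')).eraseIdx j ∈
                zeroDelBall (List.ofFn (derivWord x0 xe x')) := by
              refine ⟨j, by rw [List.length_ofFn]; omega, ?_, rfl⟩
              rw [List.getElem_ofFn, deriv_eq_dW x0 xe x' (show j < n + 1 by omega)]
              exact z1
            have m2 : (List.ofFn (derivWord x0 xe x')).eraseIdx j ∈
                zeroDelBall (List.ofFn (derivWord x0 xe x)) := by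
              refine ⟨i, by rw [List.length_ofFn]; omega, ?_, he⟩
              rw [List.getElem_ofFn, deriv_eq_dW x0 xe x (show i < n + 1 by omega)]
              exact z2
            exact H (derivWord x0 xe x') hx' (derivWord x0 xe x) hx
              (fun hcc => hne (deriv_inj x0 xe hcc).symm)
              ((List.ofFn (derivWord x0 xe x')).eraseIdx j) m1 m2
  · intro H c hc c' hc' hne v hv hv'
    obtain ⟨i, hi, hz, rfl⟩ := hv
    obtain ⟨j, hj, hz', hev⟩ := hv'
    obtain ⟨x, rfl⟩ := exists_deriv x0 xe c (hC' c hc)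
    obtain ⟨x', rfl⟩ := exists_deriv x0 xe c' (hC' c' hc')
    have hi' : i < n + 1 := by simpa using hi
    have hj' : j < n + 1 := by simpa using hj
    have hzi : dW x0 xe x i = 0 := by
      rw [← deriv_eq_dW x0 xe x hi']
      rw [List.getElem_ofFn] at hz
      exact hz
    have hzj : dW x0 xe x' j = 0 := by
      rw [← deriv_eq_dW x0 xe x' hj']
      rw [List.getElem_ofFn] at hz'
      exact hz'
    have hne' : x ≠ x' := fun h => hne (by rw [h])
    rcases le_total i j with hij | hij
    · have hL := keyBackward x0 xe hij (by omega) hzi hzj hev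
      refine H x hc x' hc' hne' ((pairLabel x0 xe x).eraseIdx i) ?_ ?_ <;>
        simp only [delBall1, Set.mem_insert_iff, Set.mem_setOf_eq]
      · exact Or.inr ⟨i, by rw [length_pairLabel]; omega, rfl⟩
      · exact Or.inr ⟨j, by rw [length_pairLabel]; omega, hL⟩
    · have hL := keyBackward x0 xe hij (by omega) hzj hzi hev.symm
      refine H x' hc' x hc hne'.symm ((pairLabel x0 xe x').eraseIdx j) ?_ ?_ <;>
        simp only [delBall1, Set.mem_insert_iff, Set.mem_setOf_eq]
      · exact Or.inr ⟨j, by rw [length_pairLabel]; omega, rfl⟩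
      · exact Or.inr ⟨i, by rw [length_pairLabel]; omega, hL⟩
end

section
/- For all integers m ≥ 1, 0 ≤ w ≤ m, and every a ∈ {0,1,…,w}, the set S_{w,a}^{m,w+1} = {s ∈ {0,1}^m : s has Hamming weight w and Σ_{i=1}^m i·s_i ≡ a (mod w+1)} is a single zero-insertion correcting code. -/
/-- Lists obtained from `u` by inserting a single symbol `0` at some position. -/
def zeroInsBall {q : ℕ} [NeZero q] (u : List (Fin q)) : Set (List (Fin q)) :=
  {v | ∃ i ≤ u.length, v = u.insertIdx i 0}
/-- Membership in `S_{w,a}^{m,w+1}`: binary sequences of length `m` of Hamming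
weight `w` with `Σ i·sᵢ ≡ a (mod w+1)` (1-indexed positions). -/
def Scond (m w a : ℕ) (s : Fin m → Fin 2) : Prop :=
  (∑ i : Fin m, (s i : ℕ)) = w ∧ (∑ i : Fin m, ((i : ℕ) + 1) * (s i : ℕ)) % (w + 1) = a

lemma ins_facts (m : ℕ) (s : Fin m → Fin 2) (n : ℕ) (hn : n ≤ m)
    (v : List (Fin 2)) (hlen : v.length = m + 1)
    (hv : v = (List.ofFn s).insertIdx n 0)
    (V : Fin (m+1) → Fin 2)
    (hVdef : ∀ p : Fin (m+1), V p = v[(p:ℕ)]'(by rw [hlen]; exact p.isLt)) :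
    V ⟨n, by omega⟩ = 0 ∧
    (∀ k : Fin m, (k:ℕ) < n → V k.castSucc = s k) ∧
    (∀ k : Fin m, n ≤ (k:ℕ) → V k.succ = s k) := by
  subst hv
  have hn' : n ≤ (List.ofFn s).length := by simpa using hn
  refine ⟨?_, ?_, ?_⟩
  · rw [hVdef]
    exact List.getElem_insertIdx_self _
  · intro k hk
    rw [hVdef]
    simp only [Fin.coe_castSucc]
    rw [List.getElem_insertIdx_of_lt hk]
    simp
  · intro k hk
    obtain ⟨d, hd⟩ : ∃ d, (k:ℕ) = n + d := ⟨(k:ℕ) - n, by omega⟩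
    rw [hVdef]
    simp only [Fin.val_succ, hd]
    rw [List.getElem_insertIdx_add_succ _ _ _ _ (by simp; omega)]
    simp only [List.getElem_ofFn]
    exact congrArg s (Fin.ext hd.symm)

lemma aux_sums (m : ℕ) (V : Fin (m+1) → Fin 2) (s : Fin m → Fin 2) (n : ℕ) (hn : n ≤ m)
    (h0 : V ⟨n, by omega⟩ = 0)
    (hlt : ∀ k : Fin m, (k:ℕ) < n → V k.castSucc = s k)
    (hge : ∀ k : Fin m, n ≤ (k:ℕ) → V k.succ = s k) :
    (∑ p : Fin (m+1), (V p : ℕ)) = ∑ k : Fin m, (s k : ℕ) ∧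
    (∑ p : Fin (m+1), ((p:ℕ) + if (p:ℕ) < n then 1 else 0) * (V p : ℕ))
      = ∑ k : Fin m, ((k:ℕ) + 1) * (s k : ℕ) := by
  set I : Fin (m+1) := ⟨n, by omega⟩ with hI
  have hVs : ∀ k : Fin m, V (I.succAbove k) = s k := by
    intro k
    rcases lt_or_ge (k:ℕ) n with h | h
    · rw [Fin.succAbove_of_castSucc_lt _ _ (by simp [hI, Fin.lt_def, h])]
      exact hlt k h
    · rw [Fin.succAbove_of_le_castSucc _ _ (by simp [hI, Fin.le_def, h])]
      exact hge k h
  have valS : ∀ k : Fin m, ((I.succAbove k : ℕ)) = if (k:ℕ) < n then (k:ℕ) else (k:ℕ)+1 := by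
    intro k
    rcases lt_or_ge (k:ℕ) n with h | h
    · rw [Fin.succAbove_of_castSucc_lt _ _ (by simp [hI, Fin.lt_def, h]), if_pos h]
      simp
    · rw [Fin.succAbove_of_le_castSucc _ _ (by simp [hI, Fin.le_def, h]), if_neg (by omega)]
      simp
  constructor
  · rw [Fin.sum_univ_succAbove (fun p => (V p : ℕ)) I]
    simp [h0, hVs]
  · rw [Fin.sum_univ_succAbove (fun p => ((p:ℕ) + if (p:ℕ) < n then 1 else 0) * (V p : ℕ)) I]
    rw [h0]
    simp only [Fin.val_zero, Nat.mul_zero, Nat.zero_add, mul_zero, zero_add]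
    refine Finset.sum_congr rfl fun k _ => ?_
    rw [hVs k, valS k]
    have : ((if (k:ℕ) < n then (k:ℕ) else (k:ℕ)+1) +
        if (if (k:ℕ) < n then (k:ℕ) else (k:ℕ)+1) < n then 1 else 0) = (k:ℕ)+1 := by
      split_ifs <;> omega
    rw [this]

lemma key_lemma (m w a : ℕ) (s s' : Fin m → Fin 2) (hs : Scond m w a s) (hs' : Scond m w a s')
    (i j : ℕ) (hi : i ≤ m) (hj : j ≤ m) (hij : i ≤ j)
    (hv : (List.ofFn s).insertIdx i (0 : Fin 2) = (List.ofFn s').insertIdx j 0) : s = s' := by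
  set v := (List.ofFn s).insertIdx i (0:Fin 2) with hvdef
  have hlen : v.length = m + 1 := by
    rw [hvdef, List.length_insertIdx_of_le_length (by simpa using hi)]
    simp
  set V : Fin (m+1) → Fin 2 := fun p => v[(p:ℕ)]'(by rw [hlen]; exact p.isLt) with hV
  obtain ⟨h0i, hlti, hgei⟩ := ins_facts m s i hi v hlen hvdef V (fun p => rfl)
  obtain ⟨h0j, hltj, hgej⟩ := ins_facts m s' j hj v hlen hv V (fun p => rfl)
  obtain ⟨hw1, hsum1⟩ := aux_sums m V s i hi h0i hlti hgei
  obtain ⟨hw2, hsum2⟩ := aux_sums m V s' j hj h0j hltj hgej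
  have hVsum : ∑ p : Fin (m+1), (V p : ℕ) = w := by rw [hw1, hs.1]
  set A := ∑ p : Fin (m+1), ((p:ℕ) + if (p:ℕ) < i then 1 else 0) * (V p : ℕ) with hA
  set A' := ∑ p : Fin (m+1), ((p:ℕ) + if (p:ℕ) < j then 1 else 0) * (V p : ℕ) with hA'
  set t := ∑ p : Fin (m+1), (if i ≤ (p:ℕ) ∧ (p:ℕ) < j then 1 else 0) * (V p : ℕ) with ht
  have hmodA : A % (w+1) = a := by rw [hsum1, hs.2]
  have hmodA' : A' % (w+1) = a := by rw [hsum2, hs'.2]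
  have hAA' : A + t = A' := by
    rw [hA, hA', ht, ← Finset.sum_add_distrib]
    refine Finset.sum_congr rfl fun p _ => ?_
    split_ifs <;> first | ring1 | (exfalso; omega)
  have hdvd : (w+1) ∣ t := by
    have h2 : A ≡ A + t [MOD w+1] := by
      unfold Nat.ModEq
      rw [hAA', hmodA, hmodA']
    simpa using (Nat.modEq_iff_dvd' (Nat.le_add_right A t)).mp h2
  have htle : t ≤ w := by
    rw [← hVsum, ht]
    refine Finset.sum_le_sum fun p _ => ?_
    split_ifs <;> simp
  have ht0 : t = 0 := by
    rcases Nat.eq_zero_or_pos t with h | h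
    · exact h
    · exact absurd (Nat.le_of_dvd h hdvd) (by omega)
  have hsum0 : (∑ p : Fin (m+1), (if i ≤ (p:ℕ) ∧ (p:ℕ) < j then 1 else 0) * (V p : ℕ)) = 0 := by
    rw [← ht]; exact ht0
  have hV0 : ∀ p : Fin (m+1), i ≤ (p:ℕ) → (p:ℕ) < j → V p = 0 := by
    intro p h1 h2
    have h3 := Finset.sum_eq_zero_iff.mp hsum0 p (Finset.mem_univ p)
    rw [if_pos ⟨h1, h2⟩, one_mul] at h3
    exact Fin.ext (by simpa using h3)
  funext k
  rcases lt_or_ge (k:ℕ) i with h | h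
  · rw [← hlti k h, ← hltj k (lt_of_lt_of_le h hij)]
  · rcases lt_or_ge (k:ℕ) j with h2 | h2
    · rw [← hgei k h, ← hltj k h2]
      rw [hV0 k.castSucc (by simpa using h) (by simpa using h2)]
      rcases eq_or_lt_of_le (show (k:ℕ)+1 ≤ j by omega) with h3 | h3
      · have hkj : k.succ = (⟨j, by omega⟩ : Fin (m+1)) := Fin.ext (by simpa using h3)
        rw [hkj]
        exact h0j
      · exact hV0 k.succ (by simp; omega) (by simpa using h3)
    · rw [← hgei k (le_trans hij h2), ← hgej k h2]

/-- For all `m ≥ 1`, `0 ≤ w ≤ m` and `a ∈ {0,…,w}`, the set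
`S_{w,a}^{m,w+1}` is a single zero-insertion correcting code. -/
theorem stmt11 (m w a : ℕ) (hm : 1 ≤ m) (hw : w ≤ m) (ha : a ≤ w)
    (s s' : Fin m → Fin 2) (hs : Scond m w a s) (hs' : Scond m w a s') (hne : s ≠ s') :
    ∀ v : List (Fin 2),
      v ∈ zeroInsBall (List.ofFn s) → v ∈ zeroInsBall (List.ofFn s') → False := by
  rintro v ⟨i, hi, rfl⟩ ⟨j, hj, hveq⟩
  simp only [List.length_ofFn] at hi hj
  rcases le_total i j with hij | hij
  · exact hne (key_lemma m w a s s' hs hs' i j hi hj hij hveq)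
  · exact hne ((key_lemma m w a s' s hs' hs j i hj hi hij hveq.symm).symm)
end
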